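/- arXiv:2102.08639 — 8 statements merged into one kernel-verified Lean document; each statement's English description precedes it below -/
import Mathlib

section
/- Let M be an irreducible stochastic matrix on a finite set V with unique invariant probability distribution ρ. Then for every w ∈ V, ρ_w = det(Id − M^{(w)}) / ∑_{x ∈ V} det(Id − M^{(x)}), where M^{(w)} is M with row and column w deleted. -/
/-- The principal submatrix of `Id - M` obtained by deleting row and column `w`. -/
noncomputable def idSubKernelDeleted {V : Type*} [Fintype V] [DecidableEq V]
    (M : Matrix V V ℝ) (w : V) : Matrix {v : V // v ≠ w} {v : V // v ≠ w} ℝ :=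
  (1 : Matrix {v : V // v ≠ w} {v : V // v ≠ w} ℝ) -
    Matrix.of (fun i j : {v : V // v ≠ w} => M i.1 j.1)

open Finset

section Aux
variable {V : Type*} [Fintype V] [DecidableEq V]

/-- Sum over the subtype `≠ w` equals the full sum when the function vanishes at `w`. -/
lemma sum_subtype_ne_of_zero (w : V) (g : V → ℝ) (hgw : g w = 0) :
    ∑ i : {v : V // v ≠ w}, g i.1 = ∑ y, g y := by
  rw [← Finset.sum_subtype (s := Finset.univ.erase w) (p := fun v => v ≠ w)
      (by simp [Finset.mem_erase]) g]
  rw [← Finset.sum_erase_add Finset.univ g (Finset.mem_univ w), hgw, add_zero]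

lemma pow_entry_nonneg (M : Matrix V V ℝ) (hMnonneg : ∀ x y, 0 ≤ M x y) :
    ∀ n x y, 0 ≤ (M ^ n) x y := by
  intro n
  induction n with
  | zero => intro x y; simp [Matrix.one_apply]; positivity
  | succ n ih =>
    intro x y
    rw [pow_succ, Matrix.mul_apply]
    exact Finset.sum_nonneg fun k _ => mul_nonneg (ih x k) (hMnonneg k y)

lemma det_idSub_ne_zero [Nonempty V] (M : Matrix V V ℝ)
    (hMnonneg : ∀ x y, 0 ≤ M x y) (hMstoch : ∀ x, ∑ y, M x y = 1)
    (hirr : ∀ x y : V, ∃ n : ℕ, 0 < (M ^ n) x y) (w : V) :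
    (idSubKernelDeleted M w).det ≠ 0 := by
  intro hdet
  obtain ⟨v, hv0, hv⟩ := Matrix.exists_mulVec_eq_zero_iff.2 hdet
  set u : V → ℝ := fun x => if h : x = w then 0 else v ⟨x, h⟩ with hu
  have huw : u w = 0 := by simp [hu]
  have huv : ∀ i : {v : V // v ≠ w}, u i.1 = v i := by
    rintro ⟨i, hi⟩; simp [hu, hi]
  have hueq : ∀ x, x ≠ w → u x = ∑ y, M x y * u y := by
    intro x hx
    have h0 := congrFun hv ⟨x, hx⟩
    rw [Matrix.mulVec, dotProduct, Pi.zero_apply] at h0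
    simp only [idSubKernelDeleted, Matrix.sub_apply, Matrix.one_apply, Matrix.of_apply,
      sub_mul, ite_mul, one_mul, zero_mul] at h0
    rw [Finset.sum_sub_distrib, Finset.sum_ite_eq Finset.univ (⟨x, hx⟩ : {v : V // v ≠ w})] at h0
    simp only [Finset.mem_univ, if_true] at h0
    have hsum : ∑ i : {v : V // v ≠ w}, M x i.1 * v i
        = ∑ y, M x y * u y := by
      rw [← sum_subtype_ne_of_zero w (fun y => M x y * u y) (by show M x w * u w = 0; rw [huw, mul_zero])]
      exact Finset.sum_congr rfl fun i _ => by rw [huv]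
    rw [hsum] at h0
    have := sub_eq_zero.mp h0
    rw [← huv ⟨x, hx⟩] at this
    linarith [this]
  obtain ⟨x0, _, hx0max⟩ := Finset.exists_max_image Finset.univ (fun x => |u x|)
    ⟨Classical.arbitrary V, Finset.mem_univ _⟩
  set m := |u x0| with hm
  have hmax : ∀ x, |u x| ≤ m := fun x => hx0max x (Finset.mem_univ x)
  have hmpos : 0 < m := by
    obtain ⟨i, hi⟩ := Function.ne_iff.mp hv0
    have : u i.1 ≠ 0 := by rw [huv]; simpa using hi
    calc (0:ℝ) < |u i.1| := abs_pos.mpr this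
      _ ≤ m := hmax _
  have hx0w : x0 ≠ w := by
    intro h; rw [h] at hm; rw [huw] at hm; simp at hm; linarith
  have hstep : ∀ x, x ≠ w → |u x| = m → ∀ z, 0 < M x z → z ≠ w ∧ |u z| = m := by
    intro x hxw hxm
    have h1 : m ≤ ∑ y, M x y * |u y| := by
      calc m = |u x| := hxm.symm
        _ = |∑ y, M x y * u y| := by rw [← hueq x hxw]
        _ ≤ ∑ y, |M x y * u y| := Finset.abs_sum_le_sum_abs _ _
        _ = ∑ y, M x y * |u y| := Finset.sum_congr rfl fun y _ => by
            rw [abs_mul, abs_of_nonneg (hMnonneg x y)]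
    have h2 : ∀ y ∈ Finset.univ, M x y * |u y| ≤ M x y * m :=
      fun y _ => mul_le_mul_of_nonneg_left (hmax y) (hMnonneg x y)
    have h3 : ∑ y, M x y * m = m := by
      rw [← Finset.sum_mul, hMstoch, one_mul]
    have hEq := (Finset.sum_eq_sum_iff_of_le h2).1
      (le_antisymm (Finset.sum_le_sum h2) (by rw [h3]; exact h1))
    intro z hz
    have hz' : |u z| = m := by
      have := hEq z (Finset.mem_univ z)
      exact mul_left_cancel₀ (ne_of_gt hz) this
    refine ⟨?_, hz'⟩
    intro hzw
    rw [hzw, huw] at hz'; simp at hz'; linarith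
  have hclaim : ∀ n z, 0 < (M ^ n) x0 z → z ≠ w ∧ |u z| = m := by
    intro n
    induction n with
    | zero =>
      intro z hz
      rw [pow_zero, Matrix.one_apply] at hz
      by_cases h : x0 = z
      · subst h; exact ⟨hx0w, rfl⟩
      · simp [h] at hz
    | succ n ih =>
      intro z hz
      rw [pow_succ, Matrix.mul_apply] at hz
      obtain ⟨k, _, hk⟩ := Finset.exists_lt_of_sum_lt (f := fun _ => (0:ℝ))
        (by simpa using hz)
      rcases mul_pos_iff.1 hk with ⟨hk1, hk2⟩ | ⟨hk1, _⟩
      · obtain ⟨hkw, hkm⟩ := ih k hk1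
        exact hstep k hkw hkm z hk2
      · exact absurd hk1 (not_lt.2 (pow_entry_nonneg M hMnonneg n x0 k))
  obtain ⟨n, hn⟩ := hirr x0 w
  exact (hclaim n w hn).1 rfl

/-- Diagonal entry of the adjugate as the determinant of the principal minor. -/
lemma adjugate_diag_eq (A : Matrix V V ℝ) (w : V) :
    A.adjugate w w = (Matrix.of fun i j : {v : V // v ≠ w} => A i.1 j.1).det := by
  rw [Matrix.adjugate_apply]
  set A' := A.updateRow w (Pi.single w 1) with hA'
  let e : {v : V // v ≠ w} ⊕ Unit ≃ V :=
    { toFun := Sum.elim Subtype.val fun _ => w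
      invFun := fun x => if h : x = w then Sum.inr () else Sum.inl ⟨x, h⟩
      left_inv := by
        rintro (⟨x, hx⟩ | ⟨⟩)
        · simp [hx]
        · simp
      right_inv := by intro x; dsimp; split <;> simp [*] }
  rw [← Matrix.det_submatrix_equiv_self e A']
  have hblock : A'.submatrix e e =
      Matrix.fromBlocks (Matrix.of fun i j : {v : V // v ≠ w} => A i.1 j.1)
        (Matrix.of fun (i : {v : V // v ≠ w}) (_ : Unit) => A i.1 w) 0 1 := by
    ext i j
    cases i with
    | inl i =>
      cases j with
      | inl j =>
        simp [hA', e, Matrix.submatrix_apply, Matrix.updateRow_apply, i.2]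
      | inr j =>
        simp [hA', e, Matrix.submatrix_apply, Matrix.updateRow_apply, i.2]
    | inr i =>
      cases j with
      | inl j =>
        simp [hA', e, Matrix.submatrix_apply, Matrix.updateRow_apply,
          Pi.single_apply, j.2, Ne.symm j.2]
      | inr j =>
        simp [hA', e, Matrix.submatrix_apply, Matrix.updateRow_apply,
          Pi.single_apply, Matrix.one_apply]
  rw [hblock, Matrix.det_fromBlocks_zero₂₁, Matrix.det_one, mul_one]

lemma idSub_eq (M : Matrix V V ℝ) (w : V) :
    idSubKernelDeleted M w
      = Matrix.of fun i j : {v : V // v ≠ w} => (1 - M : Matrix V V ℝ) i.1 j.1 := by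
  ext i j
  simp [idSubKernelDeleted, Matrix.sub_apply, Matrix.one_apply, Subtype.ext_iff]

end Aux

/-- For an irreducible stochastic matrix `M` with invariant
probability distribution `ρ`, one has
`ρ w = det(Id − M⁽ʷ⁾) / ∑_x det(Id − M⁽ˣ⁾)` for every vertex `w`. -/
theorem invariant_distribution_eq_det_ratio
    {V : Type*} [Fintype V] [DecidableEq V] [Nonempty V]
    (M : Matrix V V ℝ)
    (hMnonneg : ∀ x y, 0 ≤ M x y)
    (hMstoch : ∀ x, ∑ y, M x y = 1)
    (hirr : ∀ x y : V, ∃ n : ℕ, 0 < (M ^ n) x y)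
    (ρ : V → ℝ)
    (hρnonneg : ∀ v, 0 ≤ ρ v)
    (hρsum : ∑ v, ρ v = 1)
    (hρinv : ∀ y, ∑ x, ρ x * M x y = ρ y)
    (w : V) :
    ρ w = (idSubKernelDeleted M w).det / ∑ x, (idSubKernelDeleted M x).det := by
  classical
  set A : Matrix V V ℝ := 1 - M with hA
  have hdetminor : ∀ x, (idSubKernelDeleted M x).det ≠ 0 :=
    det_idSub_ne_zero M hMnonneg hMstoch hirr
  have hrow : ∀ x, ∑ y, A x y = 0 := by
    intro x
    simp only [hA, Matrix.sub_apply, Finset.sum_sub_distrib, hMstoch]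
    rw [show ∑ y, (1 : Matrix V V ℝ) x y = 1 by
      simp [Matrix.one_apply]]
    ring
  have hmul1 : A.mulVec (fun _ => (1:ℝ)) = 0 := by
    funext x
    rw [Matrix.mulVec, dotProduct, Pi.zero_apply]
    simp only [mul_one]
    exact hrow x
  have h1ne : (fun _ => (1:ℝ) : V → ℝ) ≠ 0 := by
    intro h
    have := congrFun h (Classical.arbitrary V)
    norm_num at this
  have hdet0 : A.det = 0 :=
    Matrix.exists_mulVec_eq_zero_iff.1 ⟨fun _ => 1, h1ne, hmul1⟩
  have hadj1 : A * A.adjugate = 0 := by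
    rw [Matrix.mul_adjugate, hdet0, zero_smul]
  have hadj2 : A.adjugate * A = 0 := by
    rw [Matrix.adjugate_mul, hdet0, zero_smul]
  -- any vector in the kernel of A is constant
  have hconst : ∀ v : V → ℝ, A.mulVec v = 0 → ∀ x z, v x = v z := by
    intro v hv x z
    by_cases hxz : x = z
    · rw [hxz]
    · set v' : V → ℝ := fun t => v t - v z with hv'
      have hv'0 : A.mulVec v' = 0 := by
        have : v' = v - (v z) • (fun _ => (1:ℝ)) := by
          funext t; simp [hv']
        rw [this, Matrix.mulVec_sub, Matrix.mulVec_smul, hmul1, hv, smul_zero, sub_zero]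
      have hv'z : v' z = 0 := by simp [hv']
      set vv : {t : V // t ≠ z} → ℝ := fun i => v' i.1 with hvv
      have hker : (idSubKernelDeleted M z).mulVec vv = 0 := by
        funext i
        rw [Matrix.mulVec, dotProduct, Pi.zero_apply]
        simp only [idSubKernelDeleted, Matrix.sub_apply, Matrix.one_apply, Matrix.of_apply,
          sub_mul, ite_mul, one_mul, zero_mul]
        rw [Finset.sum_sub_distrib, Finset.sum_ite_eq Finset.univ i]
        simp only [Finset.mem_univ, if_true]
        have hsum : ∑ j : {t : V // t ≠ z}, M i.1 j.1 * vv j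
            = ∑ y, M i.1 y * v' y := by
          rw [← sum_subtype_ne_of_zero z (fun y => M i.1 y * v' y)
            (by show M i.1 z * v' z = 0; rw [hv'z, mul_zero])]
        have h0 := congrFun hv'0 i.1
        rw [Matrix.mulVec, dotProduct, Pi.zero_apply] at h0
        simp only [hA, Matrix.sub_apply, Matrix.one_apply, sub_mul, ite_mul, one_mul,
          zero_mul] at h0
        rw [Finset.sum_sub_distrib, Finset.sum_ite_eq Finset.univ i.1] at h0
        simp only [Finset.mem_univ, if_true] at h0
        rw [hsum]
        exact h0
      have hvv0 : vv = 0 := by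
        by_contra h
        exact hdetminor z (Matrix.exists_mulVec_eq_zero_iff.1 ⟨vv, h, hker⟩)
      have : v' x = 0 := congrFun hvv0 ⟨x, hxz⟩
      simpa [hv'] using sub_eq_zero.mp this
  -- kernel of A is the span of the constant vector
  have hker_eq : LinearMap.ker A.mulVecLin
      = Submodule.span ℝ {(fun _ => (1:ℝ) : V → ℝ)} := by
    apply le_antisymm
    · intro v hv
      have hv0 : A.mulVec v = 0 := by
        rwa [LinearMap.mem_ker, Matrix.mulVecLin_apply] at hv
      have : v = (v (Classical.arbitrary V)) • (fun _ => (1:ℝ)) := by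
        funext t
        simp [hconst v hv0 t (Classical.arbitrary V)]
      rw [this]
      exact Submodule.smul_mem _ _ (Submodule.mem_span_singleton_self _)
    · rw [Submodule.span_le, Set.singleton_subset_iff]
      rw [SetLike.mem_coe, LinearMap.mem_ker, Matrix.mulVecLin_apply]
      exact hmul1
  have hfr : Module.finrank ℝ (LinearMap.ker A.mulVecLin) = 1 := by
    rw [hker_eq]
    exact finrank_span_singleton h1ne
  have hrn := LinearMap.finrank_range_add_finrank_ker A.mulVecLin
  have hrnT := LinearMap.finrank_range_add_finrank_ker (A.transpose).mulVecLin
  have hrkT : (A.transpose).rank = A.rank := Matrix.rank_transpose A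
  have hfrT : Module.finrank ℝ (LinearMap.ker (A.transpose).mulVecLin) = 1 := by
    have h1 : A.rank + Module.finrank ℝ (LinearMap.ker A.mulVecLin)
        = Module.finrank ℝ (V → ℝ) := hrn
    have h2 : (A.transpose).rank + Module.finrank ℝ (LinearMap.ker (A.transpose).mulVecLin)
        = Module.finrank ℝ (V → ℝ) := hrnT
    omega
  -- ρ is in the kernel of A.transpose
  have hρker : (A.transpose).mulVec ρ = 0 := by
    funext y
    rw [Matrix.mulVec, dotProduct, Pi.zero_apply]
    simp only [Matrix.transpose_apply, hA, Matrix.sub_apply, Matrix.one_apply, sub_mul,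
      ite_mul, one_mul, zero_mul]
    rw [Finset.sum_sub_distrib, Finset.sum_ite_eq' Finset.univ y]
    simp only [Finset.mem_univ, if_true]
    have : ∑ x, M x y * ρ x = ρ y := by
      rw [← hρinv y]
      exact Finset.sum_congr rfl fun x _ => mul_comm _ _
    rw [this]
    ring
  have hρne : ρ ≠ 0 := by
    intro h
    rw [h] at hρsum
    simp at hρsum
  -- f is the diagonal of the adjugate
  set f : V → ℝ := fun y => A.adjugate y y with hf
  have hcol : ∀ x y, A.adjugate x y = f y := by
    intro x y
    have : A.mulVec (fun i => A.adjugate i y) = 0 := by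
      funext i
      rw [Matrix.mulVec, dotProduct, Pi.zero_apply]
      have := congrFun (congrFun hadj1 i) y
      rwa [Matrix.mul_apply, Matrix.zero_apply] at this
    exact hconst _ this x y
  have hfker : (A.transpose).mulVec f = 0 := by
    funext y
    rw [Matrix.mulVec, dotProduct, Pi.zero_apply]
    have := congrFun (congrFun hadj2 (Classical.arbitrary V)) y
    rw [Matrix.mul_apply, Matrix.zero_apply] at this
    rw [← this]
    exact Finset.sum_congr rfl fun x _ => by
      rw [Matrix.transpose_apply, hcol (Classical.arbitrary V) x, mul_comm]
  -- the kernel of A.transpose is spanned by ρ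
  have hspan : Submodule.span ℝ {ρ} = LinearMap.ker (A.transpose).mulVecLin := by
    apply Submodule.eq_of_le_of_finrank_eq
    · rw [Submodule.span_le, Set.singleton_subset_iff, SetLike.mem_coe, LinearMap.mem_ker,
        Matrix.mulVecLin_apply]
      exact hρker
    · rw [finrank_span_singleton hρne, hfrT]
  have hfmem : f ∈ Submodule.span ℝ {ρ} := by
    rw [hspan, LinearMap.mem_ker, Matrix.mulVecLin_apply]
    exact hfker
  obtain ⟨c, hc⟩ := Submodule.mem_span_singleton.mp hfmem
  -- f equals the minors' determinants
  have hfdet : ∀ x, f x = (idSubKernelDeleted M x).det := by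
    intro x
    show A.adjugate x x = _
    rw [adjugate_diag_eq A x, hA, ← idSub_eq M x]
  have hfw : f w = c * ρ w := by rw [← hc]; simp
  have hcne : c ≠ 0 := by
    intro h
    apply hdetminor w
    rw [← hfdet w, hfw, h, zero_mul]
  have hsumf : ∑ x, f x = c := by
    rw [← hc]
    simp only [Pi.smul_apply, smul_eq_mul]
    rw [← Finset.mul_sum, hρsum, mul_one]
  have hsumdet : ∑ x, (idSubKernelDeleted M x).det = c := by
    rw [← hsumf]
    exact Finset.sum_congr rfl fun x _ => (hfdet x).symm
  rw [hsumdet, ← hfdet w, hfw]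
  field_simp
end

section
/- Let G be a finite connected graph on vertex set V, M an irreducible stochastic matrix positive on G, ρ its invariant distribution, and ←M the time-reversed kernel. Then for every fixed root r ∈ V, ∑_{(t,r) spanning trees of G rooted at r} ∏_{e ∈ E(t,r)} M_e = ∑_{(t,r) spanning trees of G rooted at r} ∏_{e ∈ E(t,r)} ←M_e. -/
open scoped Classical

section Aux

variable {V : Type*} [Fintype V] [DecidableEq V]

private lemma absorb (p : V → V) (r : V) (hpr : p r = r) {u : V} {n m : ℕ}
    (h : p^[n] u = r) (hnm : n ≤ m) : p^[m] u = r := by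
  obtain ⟨k, rfl⟩ := Nat.exists_eq_add_of_le hnm
  induction k with
  | zero => simpa using h
  | succ k ih =>
    rw [show n + (k + 1) = (n + k) + 1 by ring, Function.iterate_succ_apply',
      ih (Nat.le_add_right n k), hpr]

private lemma det_tree_indicator (r : V) (p : V → V) (hpr : p r = r) :
    Matrix.det (Matrix.of fun u v : {x : V // x ≠ r} =>
      (if u = v then (1 : ℝ) else 0) - (if (v : V) = p u then 1 else 0)) =
      (if ∀ u, ∃ n, p^[n] u = r then 1 else 0) := by
  set S := {x : V // x ≠ r}
  set P : Matrix S S ℝ := Matrix.of fun u v : S => if (v : V) = p u then (1 : ℝ) else 0 with hP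
  have hNP : (Matrix.of fun u v : S =>
      (if u = v then (1 : ℝ) else 0) - (if (v : V) = p u then 1 else 0)) = 1 - P := by
    ext u v
    simp [P, Matrix.one_apply]
  rw [hNP]
  have hPk : ∀ k (u v : S), (P ^ k) u v = if (v : V) = p^[k] (u : V) then 1 else 0 := by
    intro k
    induction k with
    | zero =>
      intro u v
      simp only [pow_zero, Matrix.one_apply, Function.iterate_zero, id_eq]
      by_cases h : u = v
      · subst h; simp
      · rw [if_neg h]; exact (if_neg fun hv : (v : V) = u => h (Subtype.ext hv.symm)).symm
    | succ k ih =>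
      intro u v
      rw [pow_succ, Matrix.mul_apply]
      by_cases h : p^[k] (u : V) = r
      · have h' : p^[k + 1] (u : V) = r := by
          rw [Function.iterate_succ_apply', h, hpr]
        rw [Finset.sum_eq_zero, eq_comm, if_neg fun hv => v.2 (hv.trans h')]
        intro w _
        rw [ih, if_neg fun hw => w.2 (hw.trans h), zero_mul]
      · rw [Finset.sum_eq_single (⟨p^[k] (u : V), h⟩ : S)]
        · rw [ih, if_pos rfl, one_mul, hP, Matrix.of_apply,
            Function.iterate_succ_apply']
        · intro w _ hw
          rw [ih, if_neg fun hww => hw (Subtype.ext hww), zero_mul]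
        · intro hw; exact absurd (Finset.mem_univ _) hw
  by_cases hall : ∀ u, ∃ n, p^[n] u = r
  · rw [if_pos hall]
    choose f hf using hall
    set K := Finset.univ.sup f with hK
    have hKr : ∀ u : V, p^[K] u = r := fun u =>
      absorb p r hpr (hf u) (Finset.le_sup (Finset.mem_univ u))
    have hPK : P ^ K = 0 := by
      ext u v
      rw [hPk, if_neg fun hv => v.2 (hv.trans (hKr u.1))]
      simp
    have hnil : IsNilpotent P := ⟨K, hPK⟩
    have hu : IsUnit P.charpolyRev := Matrix.isUnit_charpolyRev_of_isNilpotent hnil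
    obtain ⟨c, hc1, hc2⟩ := Polynomial.isUnit_iff.mp hu
    have hc0 : c = 1 := by
      have h := Matrix.eval_charpolyRev (M := P)
      rw [← hc2] at h
      simpa using h
    have hrev1 : P.charpolyRev = 1 := by rw [← hc2, hc0, map_one]
    have heval : Polynomial.eval 1 P.charpolyRev = (1 - P).det := by
      rw [Matrix.charpolyRev, ← Polynomial.coe_evalRingHom, RingHom.map_det]
      congr 1
      ext i j
      rcases eq_or_ne i j with h | h <;>
        simp [h, Matrix.one_apply]
    rw [hrev1] at heval
    simpa using heval.symm
  · rw [if_neg hall]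
    push_neg at hall
    obtain ⟨u0, hu0⟩ := hall
    obtain ⟨i, j, hij, hfij⟩ := Finite.exists_ne_map_eq_of_infinite (fun n : ℕ => p^[n] u0)
    wlog hlt : i < j generalizing i j
    · exact this j i hij.symm hfij.symm (by omega)
    set a := p^[i] u0 with ha
    set m := j - i with hm
    have hm0 : 0 < m := by omega
    have hcyc : p^[m] a = a := by
      rw [ha, ← Function.iterate_add_apply, show m + i = j by omega, ← hfij]
    have hnoR : ∀ t, p^[t] a ≠ r := fun t => by
      rw [ha, ← Function.iterate_add_apply]; exact hu0 _
    have hwrap : ∀ t, p^[t] a = p^[t % m] a := by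
      intro t
      induction t using Nat.strong_induction_on with
      | _ t ih =>
        by_cases h : t < m
        · rw [Nat.mod_eq_of_lt h]
        · push_neg at h
          have h1 : t - m < t := by omega
          have : p^[t] a = p^[t - m] a :=
            calc p^[t] a = p^[t - m + m] a :=
                  congrArg (fun k => p^[k] a) (Nat.sub_add_cancel h).symm
              _ = p^[t - m] (p^[m] a) := Function.iterate_add_apply p (t - m) m a
              _ = p^[t - m] a := by rw [hcyc]
          rw [this, ih _ h1, ← Nat.mod_eq_sub_mod h]
    have ha' : a ≠ r := by simpa using hnoR 0
    set cyc : Finset V := (Finset.range m).image (fun t => p^[t] a) with hcycdef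
    have hacyc : a ∈ cyc := Finset.mem_image.mpr ⟨0, Finset.mem_range.mpr hm0, rfl⟩
    have hmemiter : ∀ t, p^[t] a ∈ cyc := fun t => by
      rw [hwrap t]
      exact Finset.mem_image.mpr ⟨t % m, Finset.mem_range.mpr (Nat.mod_lt _ hm0), rfl⟩
    have hcycne : ∀ x ∈ cyc, x ≠ r := by
      intro x hx
      obtain ⟨t, _, rfl⟩ := Finset.mem_image.mp hx
      exact hnoR t
    have hmapsto : ∀ x ∈ cyc, p x ∈ cyc := by
      intro x hx
      obtain ⟨t, _, rfl⟩ := Finset.mem_image.mp hx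
      rw [← Function.iterate_succ_apply' p t a]
      exact hmemiter (t + 1)
    have hback : ∀ x ∈ cyc, p^[m - 1] (p x) = x := by
      intro x hx
      obtain ⟨t, _, rfl⟩ := Finset.mem_image.mp hx
      calc p^[m - 1] (p (p^[t] a)) = p^[m - 1] (p^[t + 1] a) := by
            rw [Function.iterate_succ_apply']
        _ = p^[(m - 1) + (t + 1)] a := (Function.iterate_add_apply p (m - 1) (t + 1) a).symm
        _ = p^[t + m] a := congrArg (fun k => p^[k] a) (by omega)
        _ = p^[t] (p^[m] a) := Function.iterate_add_apply p t m a
        _ = p^[t] a := by rw [hcyc]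
    have hinj : ∀ x ∈ cyc, ∀ y ∈ cyc, p x = p y → x = y := by
      intro x hx y hy hxy
      rw [← hback x hx, hxy, hback y hy]
    have himg : cyc.image p = cyc := by
      apply Finset.eq_of_subset_of_card_le
      · intro y hy
        obtain ⟨x, hx, rfl⟩ := Finset.mem_image.mp hy
        exact hmapsto x hx
      · rw [Finset.card_image_of_injOn fun x hx y hy h =>
          hinj x (Finset.mem_coe.mp hx) y (Finset.mem_coe.mp hy) h]
    have hsub : cyc ⊆ Finset.univ.erase r := fun x hx =>
      Finset.mem_erase.mpr ⟨hcycne x hx, Finset.mem_univ x⟩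
    rw [← Matrix.exists_vecMul_eq_zero_iff]
    refine ⟨fun v : S => if (v : V) ∈ cyc then (1 : ℝ) else 0, ?_, ?_⟩
    · intro h0
      have h1 := congrFun h0 ⟨a, ha'⟩
      rw [if_pos hacyc] at h1
      exact one_ne_zero (h1.trans rfl)
    · funext v
      have hvm : ∀ u : S, (fun v : S => if (v : V) ∈ cyc then (1 : ℝ) else 0) u *
          (1 - P) u v = (if u = v then (if (u : V) ∈ cyc then (1 : ℝ) else 0) else 0)
            - (if (u : V) ∈ cyc then (if (v : V) = p u then (1 : ℝ) else 0) else 0) := by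
        intro u
        rw [Matrix.sub_apply, Matrix.one_apply, hP, Matrix.of_apply, mul_sub, boole_mul,
          boole_mul]
        congr 1
        by_cases h1 : u = v <;> by_cases h2 : (u : V) ∈ cyc <;> simp [h1, h2]
      have key : (∑ u : S, (if (u : V) ∈ cyc then (if (v : V) = p u then (1 : ℝ) else 0)
          else 0)) = if (v : V) ∈ cyc then (1 : ℝ) else 0 := by
        rw [← Finset.sum_subtype (Finset.univ.erase r)
          (fun x => by simp [Finset.mem_erase]) (fun x : V =>
            if x ∈ cyc then (if (v : V) = p x then (1 : ℝ) else 0) else 0)]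
        rw [Finset.sum_ite_mem, Finset.inter_eq_right.mpr hsub,
          ← Finset.sum_image (g := p) (f := fun y => if (v : V) = y then (1 : ℝ) else 0) hinj,
          himg, Finset.sum_ite_eq]
      rw [Pi.zero_apply]
      have hvec : Matrix.vecMul (fun v : S => if (v : V) ∈ cyc then (1 : ℝ) else 0) (1 - P) v
          = ∑ u : S, (if (u : V) ∈ cyc then (1 : ℝ) else 0) * (1 - P) u v := by
        simp [Matrix.vecMul, dotProduct]
      rw [hvec, Finset.sum_congr rfl fun u _ => hvm u, Finset.sum_sub_distrib, key,
        Finset.sum_ite_eq' Finset.univ v (fun u : S => if (u : V) ∈ cyc then (1 : ℝ) else 0)]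
      simp

private lemma mtt (r : V) (w : V → V → ℝ) (hw : ∀ x, ∑ y, w x y = 1) :
    (∑ p : V → V, if (p r = r ∧ ∀ u, ∃ n : ℕ, p^[n] u = r)
        then ∏ u ∈ Finset.univ.erase r, w u (p u) else 0) =
      Matrix.det (Matrix.of fun u v : {x : V // x ≠ r} =>
        (if u = v then (1 : ℝ) else 0) - w u.1 v.1) := by
  set S := {x : V // x ≠ r} with hS
  set R : S → V → (S → ℝ) := fun u y =>
    fun v => (if u = v then (1 : ℝ) else 0) - (if (v : V) = y then 1 else 0) with hR
  have hrow : (Matrix.of fun u v : S => (if u = v then (1 : ℝ) else 0) - w u.1 v.1) =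
      fun u : S => ∑ y : V, w u.1 y • R u y := by
    funext u v
    rw [Matrix.of_apply, Finset.sum_apply]
    simp only [Pi.smul_apply, smul_eq_mul, hR, mul_sub]
    rw [Finset.sum_sub_distrib, ← Finset.sum_mul, hw u.1, one_mul]
    congr 1
    rw [Finset.sum_congr rfl fun y _ => mul_boole ((v : V) = y) (w u.1 y),
      Finset.sum_ite_eq Finset.univ (v : V) (w u.1)]
    simp
  set F := (Matrix.detRowAlternating (R := ℝ) (n := S)).toMultilinearMap with hF
  have hdet : ∀ q : S → V,
      F (fun u : S => R u (q u)) =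
        Matrix.det (Matrix.of fun u v : S =>
          (if u = v then (1 : ℝ) else 0) - (if (v : V) = q u then 1 else 0)) := by
    intro q; rfl
  have expand : Matrix.det (Matrix.of fun u v : S =>
      (if u = v then (1 : ℝ) else 0) - w u.1 v.1) =
      ∑ q : S → V, (∏ u : S, w u.1 (q u)) *
        Matrix.det (Matrix.of fun u v : S =>
          (if u = v then (1 : ℝ) else 0) - (if (v : V) = q u then 1 else 0)) := by
    have h0 : Matrix.det (Matrix.of fun u v : S =>
        (if u = v then (1 : ℝ) else 0) - w u.1 v.1) =
        F (fun u : S => ∑ y : V, w u.1 y • R u y) := by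
      have h1 : Matrix.det (Matrix.of fun u v : S =>
          (if u = v then (1 : ℝ) else 0) - w u.1 v.1) =
          F (Matrix.of fun u v : S => (if u = v then (1 : ℝ) else 0) - w u.1 v.1) := rfl
      rw [h1, hrow]
    rw [h0, F.map_sum (g := fun (u : S) (y : V) => w u.1 y • R u y)]
    refine Finset.sum_congr rfl fun q _ => ?_
    have hsmul := F.map_smul_univ (fun u : S => w u.1 (q u)) (fun u : S => R u (q u))
    rw [show (fun u : S => w u.1 (q u) • R u (q u)) = fun u => (fun u : S => w u.1 (q u)) u • (fun u : S => R u (q u)) u from rfl]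
    rw [hsmul, smul_eq_mul, hdet q]
  set ext : (S → V) → (V → V) := fun q v => if h : v = r then r else q ⟨v, h⟩ with hext
  have hextr : ∀ q, ext q r = r := fun q => dif_pos rfl
  have hextq : ∀ (q : S → V) (u : S), ext q u.1 = q u := fun q u => dif_neg u.2
  have hterm : ∀ q : S → V,
      Matrix.det (Matrix.of fun u v : S =>
        (if u = v then (1 : ℝ) else 0) - (if (v : V) = q u then 1 else 0)) =
      (if ∀ u, ∃ n : ℕ, (ext q)^[n] u = r then 1 else 0) := by
    intro q
    have h1 : (Matrix.of fun u v : S =>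
        (if u = v then (1 : ℝ) else 0) - (if (v : V) = q u then 1 else 0)) =
        (Matrix.of fun u v : S =>
        (if u = v then (1 : ℝ) else 0) - (if (v : V) = ext q u.1 then 1 else 0)) := by
      funext u v
      rw [Matrix.of_apply, Matrix.of_apply, hextq]
    rw [h1]
    exact det_tree_indicator r (ext q) (hextr q)
  have expand2 : Matrix.det (Matrix.of fun u v : S =>
      (if u = v then (1 : ℝ) else 0) - w u.1 v.1) =
      ∑ q : S → V, (∏ u : S, w u.1 (q u)) *
        (if ∀ u, ∃ n : ℕ, (ext q)^[n] u = r then 1 else 0) :=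
    expand.trans (Finset.sum_congr rfl fun q _ => by rw [hterm q])
  rw [expand2]
  set Fn : (V → V) → ℝ := fun p => if (p r = r ∧ ∀ u, ∃ n : ℕ, p^[n] u = r)
      then ∏ u ∈ Finset.univ.erase r, w u (p u) else 0 with hFn
  have hsymm : ∀ (a : V) (q : S → V) (v : V),
      (Equiv.funSplitAt r V).symm (a, q) v = if h : v = r then a else q ⟨v, h⟩ := by
    intro a q v
    by_cases h : v = r
    · subst h
      simp [Equiv.funSplitAt, Equiv.piSplitAt]
    · simp [Equiv.funSplitAt, Equiv.piSplitAt, h]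
  calc (∑ p : V → V, Fn p)
      = ∑ z : V × (S → V), Fn ((Equiv.funSplitAt r V).symm z) :=
        (Equiv.sum_comp (Equiv.funSplitAt r V).symm Fn).symm
    _ = ∑ a : V, ∑ q : S → V, Fn ((Equiv.funSplitAt r V).symm (a, q)) :=
        Fintype.sum_prod_type _
    _ = ∑ q : S → V, Fn ((Equiv.funSplitAt r V).symm (r, q)) := by
        refine Finset.sum_eq_single r (fun a _ ha => Finset.sum_eq_zero fun q _ => ?_)
          (fun h => absurd (Finset.mem_univ r) h)
        have hra : (Equiv.funSplitAt r V).symm (a, q) r = a := by rw [hsymm]; simp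
        simp only [hFn]
        rw [if_neg]
        rintro ⟨h1, -⟩
        exact ha (hra ▸ h1)
    _ = ∑ q : S → V, (∏ u : S, w u.1 (q u)) *
          (if ∀ u, ∃ n : ℕ, (ext q)^[n] u = r then 1 else 0) := by
        refine Finset.sum_congr rfl fun q _ => ?_
        have hq : (Equiv.funSplitAt r V).symm (r, q) = ext q := by
          funext v
          rw [hsymm, hext]
        rw [hq]
        simp only [hFn]
        have hprod : (∏ u ∈ Finset.univ.erase r, w u (ext q u)) =
            ∏ u : S, w u.1 (q u) := by
          rw [Finset.prod_subtype (p := fun x : V => x ≠ r) (Finset.univ.erase r)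
            (fun x => by simp [Finset.mem_erase]) (fun x : V => w x (ext q x))]
          exact Finset.prod_congr rfl fun u _ => by rw [hextq]
        by_cases hreach : ∀ u, ∃ n : ℕ, (ext q)^[n] u = r
        · rw [if_pos ⟨hextr q, hreach⟩, if_pos hreach, mul_one, hprod]
        · rw [if_neg fun hc => hreach hc.2, if_neg hreach, mul_zero]


end Aux

/-- A rooted spanning tree of `G` with root `r`, encoded by its parent map. -/
def IsRootedSpanningTree {V : Type*} (G : SimpleGraph V) (p : V → V) (r : V) : Prop :=
  p r = r ∧ (∀ u, u ≠ r → G.Adj u (p u)) ∧ (∀ u, ∃ n : ℕ, p^[n] u = r)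

/-- For an irreducible stochastic kernel `M` positive on a finite
connected graph `G`, with invariant distribution `ρ` and reversed kernel `←M`,
the total tree weights for `M` and `←M` rooted at any fixed `r` coincide. -/
theorem tree_weight_sums_eq_for_reversed_kernel
    {V : Type*} [Fintype V] [DecidableEq V] [Nonempty V]
    (G : SimpleGraph V) (hconn : G.Connected)
    (M : Matrix V V ℝ)
    (hMnonneg : ∀ x y, 0 ≤ M x y)
    (hMstoch : ∀ x, ∑ y, M x y = 1)
    (hpos : ∀ x y, 0 < M x y ↔ G.Adj x y)
    (ρ : V → ℝ)
    (hρpos : ∀ v, 0 < ρ v)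
    (hρsum : ∑ v, ρ v = 1)
    (hρinv : ∀ y, ∑ x, ρ x * M x y = ρ y)
    (revM : Matrix V V ℝ)
    (hrev : ∀ x y, revM x y = ρ y * M y x / ρ x)
    (r : V) :
    (∑ p : V → V, if IsRootedSpanningTree G p r
        then ∏ u ∈ Finset.univ.erase r, M u (p u) else 0) =
      ∑ p : V → V, if IsRootedSpanningTree G p r
        then ∏ u ∈ Finset.univ.erase r, revM u (p u) else 0 := by
  classical
  set S := {x : V // x ≠ r} with hS
  have hρne : ∀ v, ρ v ≠ 0 := fun v => (hρpos v).ne'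
  have hrevstoch : ∀ x, ∑ y, revM x y = 1 := by
    intro x
    have h1 : ∑ y, revM x y = (∑ y, ρ y * M y x) / ρ x := by
      rw [Finset.sum_div]
      exact Finset.sum_congr rfl fun y _ => hrev x y
    rw [h1, hρinv x, div_self (hρne x)]
  have hMzero : ∀ x y, ¬ G.Adj x y → M x y = 0 := fun x y h =>
    le_antisymm (not_lt.mp fun hlt => h ((hpos x y).mp hlt)) (hMnonneg x y)
  have hrevzero : ∀ x y, ¬ G.Adj x y → revM x y = 0 := fun x y h => by
    rw [hrev, hMzero y x (fun ha => h ha.symm), mul_zero, zero_div]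
  have stepA : ∀ (w : Matrix V V ℝ), (∀ x y, ¬ G.Adj x y → w x y = 0) →
      (∑ p : V → V, if IsRootedSpanningTree G p r
        then ∏ u ∈ Finset.univ.erase r, w u (p u) else 0) =
      (∑ p : V → V, if (p r = r ∧ ∀ u, ∃ n : ℕ, p^[n] u = r)
        then ∏ u ∈ Finset.univ.erase r, w u (p u) else 0) := by
    intro w hw0
    refine Finset.sum_congr rfl fun p _ => ?_
    by_cases hT : IsRootedSpanningTree G p r
    · rw [if_pos hT, if_pos ⟨hT.1, hT.2.2⟩]
    · rw [if_neg hT]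
      by_cases hC : (p r = r ∧ ∀ u, ∃ n : ℕ, p^[n] u = r)
      · rw [if_pos hC]
        have hna : ¬ ∀ u, u ≠ r → G.Adj u (p u) := fun hadj => hT ⟨hC.1, hadj, hC.2⟩
        push_neg at hna
        obtain ⟨u, hur, hnadj⟩ := hna
        exact (Finset.prod_eq_zero (Finset.mem_erase.mpr ⟨hur, Finset.mem_univ u⟩)
          (hw0 u (p u) hnadj)).symm
      · rw [if_neg hC]
  have hdeteq : Matrix.det (Matrix.of fun u v : S =>
      (if u = v then (1 : ℝ) else 0) - M u.1 v.1) =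
      Matrix.det (Matrix.of fun u v : S =>
      (if u = v then (1 : ℝ) else 0) - revM u.1 v.1) := by
    have hBA : (Matrix.of fun u v : S => (if u = v then (1 : ℝ) else 0) - revM u.1 v.1) =
        Matrix.diagonal (fun u : S => (ρ u.1)⁻¹) *
          Matrix.transpose (Matrix.of fun u v : S =>
            (if u = v then (1 : ℝ) else 0) - M u.1 v.1) *
          Matrix.diagonal (fun u : S => ρ u.1) := by
      ext u v
      rw [Matrix.mul_diagonal, Matrix.diagonal_mul, Matrix.transpose_apply, Matrix.of_apply,
        Matrix.of_apply, hrev]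
      by_cases h : u = v
      · subst h
        field_simp
        rw [mul_div_cancel_left₀ _ (hρne u.1), mul_div_cancel_left₀ _ (hρne u.1)]
      · rw [if_neg h, if_neg fun h2 : v = u => h h2.symm]
        field_simp
        ring
    have hprod1 : (∏ u : S, (ρ u.1)⁻¹) * (∏ u : S, ρ u.1) = 1 := by
      rw [← Finset.prod_mul_distrib]
      exact Finset.prod_eq_one fun u _ => inv_mul_cancel₀ (hρne u.1)
    rw [hBA, Matrix.det_mul, Matrix.det_mul, Matrix.det_diagonal, Matrix.det_diagonal,
      Matrix.det_transpose]
    calc Matrix.det (Matrix.of fun u v : S => (if u = v then (1 : ℝ) else 0) - M u.1 v.1)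
        = ((∏ u : S, (ρ u.1)⁻¹) * (∏ u : S, ρ u.1)) *
            Matrix.det (Matrix.of fun u v : S =>
              (if u = v then (1 : ℝ) else 0) - M u.1 v.1) := by
          rw [hprod1, one_mul]
      _ = (∏ u : S, (ρ u.1)⁻¹) *
            Matrix.det (Matrix.of fun u v : S =>
              (if u = v then (1 : ℝ) else 0) - M u.1 v.1) * (∏ u : S, ρ u.1) := by
          ring
  rw [stepA M hMzero, stepA revM hrevzero, mtt r (fun x y => M x y) hMstoch,
    mtt r (fun x y => revM x y) hrevstoch]
  exact hdeteq
end

section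
/- For a fixed vertex r of a finite set V and a matrix M, the signed sum over all collections C of pairwise vertex-disjoint directed cycles (of length ≥ 1) on V \ {r} of (−1)^{N(C)} ∏_{cycles c of C} ∏_{edges e of c} M_e equals det(Id − M^{(r)}), where N(C) is the number of cycles in C and M^{(r)} is M with row and column r deleted. -/
open scoped Classical

lemma sign_real {α : Type*} [Fintype α] [DecidableEq α] (π : Equiv.Perm α) :
    ((Equiv.Perm.sign π : ℤ) : ℝ) =
      (-1 : ℝ) ^ (π.support.card + π.cycleFactorsFinset.card) := by
  have hc : Multiset.card π.cycleType = π.cycleFactorsFinset.card := by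
    simp [Equiv.Perm.cycleType_def]
  rw [Equiv.Perm.sign_of_cycleType, Equiv.Perm.sum_cycleType, hc] at *
  push_cast; norm_num

lemma key {α : Type*} [Fintype α] [DecidableEq α] (N : Matrix α α ℝ) (π : Equiv.Perm α) :
    ((Equiv.Perm.sign π : ℤ) : ℝ) * ∏ i, (1 - N) i (π i) =
      ∑ A : Finset α, if (∀ x ∉ A, π x = x) then
        (-1 : ℝ) ^ (π.cycleFactorsFinset.card + (A.filter fun x => π x = x).card) *
          ∏ x ∈ A, N x (π x)
      else 0 := by
  have h1 : ∏ i, (1 - N) i (π i) =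
      (∏ i ∈ π.support, (- N i (π i))) * ∏ i ∈ π.supportᶜ, ((- N i i) + 1) := by
    rw [← Finset.prod_mul_prod_compl π.support]
    congr 1
    · exact Finset.prod_congr rfl fun i hi => by
        simp [Matrix.sub_apply, Matrix.one_apply_ne (Equiv.Perm.mem_support.mp hi).symm]
    · refine Finset.prod_congr rfl fun i hi => ?_
      have hfix : π i = i := by
        simpa using (Equiv.Perm.notMem_support.mp (Finset.mem_compl.mp hi))
      rw [hfix]
      simp only [Matrix.sub_apply, Matrix.one_apply_eq]
      ring
  rw [h1, Finset.prod_add, Finset.mul_sum, Finset.mul_sum]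
  rw [show (∑ A : Finset α, if (∀ x ∉ A, π x = x) then
        (-1 : ℝ) ^ (π.cycleFactorsFinset.card + (A.filter fun x => π x = x).card) *
          ∏ x ∈ A, N x (π x) else 0) =
      ∑ A ∈ Finset.univ.filter (fun A : Finset α => π.support ⊆ A),
        (-1 : ℝ) ^ (π.cycleFactorsFinset.card + (A.filter fun x => π x = x).card) *
          ∏ x ∈ A, N x (π x) from ?_]
  · refine Finset.sum_nbij' (fun B => π.support ∪ B) (fun A => A \ π.support) ?_ ?_ ?_ ?_ ?_
    · intro B hB
      simp [Finset.subset_union_left]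
    · intro A hA
      simp only [Finset.mem_powerset]
      exact fun x hx => Finset.mem_compl.mpr (Finset.mem_sdiff.mp hx).2
    · intro B hB
      simp only [Finset.mem_powerset] at hB
      have hdisj : Disjoint π.support B :=
        Finset.disjoint_left.mpr fun x hx hxB => (Finset.mem_compl.mp (hB hxB)) hx
      show (π.support ∪ B) \ π.support = B
      rw [Finset.union_sdiff_cancel_left hdisj]
    · intro A hA
      simp only [Finset.mem_filter] at hA
      show π.support ∪ (A \ π.support) = A
      exact Finset.union_sdiff_of_subset hA.2
    · intro B hB
      simp only [Finset.mem_powerset] at hB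
      have hdisj : Disjoint π.support B :=
        Finset.disjoint_left.mpr fun x hx hxB => (Finset.mem_compl.mp (hB hxB)) hx
      have hBfix : ∀ x ∈ B, π x = x := fun x hx => by
        simpa using Equiv.Perm.notMem_support.mp (Finset.mem_compl.mp (hB hx))
      have hfilter : ((π.support ∪ B).filter fun x => π x = x) = B := by
        ext x
        simp only [Finset.mem_filter, Finset.mem_union]
        constructor
        · rintro ⟨hx | hx, hfx⟩
          · exact absurd hfx (Equiv.Perm.mem_support.mp hx)
          · exact hx
        · exact fun hx => ⟨Or.inr hx, hBfix x hx⟩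
      have e1 : ∏ i ∈ π.support, (- N i (π i)) =
          (-1 : ℝ) ^ π.support.card * ∏ i ∈ π.support, N i (π i) := by
        rw [Finset.prod_congr rfl fun i (_ : i ∈ π.support) => (neg_one_mul (N i (π i))).symm,
          Finset.prod_mul_distrib, Finset.prod_const]
      have e2 : ∏ i ∈ B, (- N i i) = (-1 : ℝ) ^ B.card * ∏ i ∈ B, N i (π i) := by
        rw [show ∏ i ∈ B, N i (π i) = ∏ i ∈ B, N i i from
          Finset.prod_congr rfl fun i hi => by rw [hBfix i hi]]
        rw [Finset.prod_congr rfl fun i (_ : i ∈ B) => (neg_one_mul (N i i)).symm,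
          Finset.prod_mul_distrib, Finset.prod_const]
      have hone : ((-1:ℝ)) ^ π.support.card * (-1:ℝ) ^ π.support.card = 1 := by
        rw [← pow_add, ← two_mul, pow_mul]; norm_num
      rw [hfilter, sign_real, Finset.prod_const_one, mul_one,
        Finset.prod_union hdisj, e1, e2, pow_add, pow_add]
      linear_combination ((-1:ℝ) ^ π.cycleFactorsFinset.card * (-1:ℝ) ^ B.card *
        ((∏ i ∈ π.support, N i (π i)) * ∏ i ∈ B, N i (π i))) * hone
  · rw [Finset.sum_filter]
    refine Finset.sum_congr rfl fun A _ => ?_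
    congr 1
    simp only [eq_iff_iff]
    constructor
    · intro h x hx
      by_contra hxA
      exact (Equiv.Perm.mem_support.mp hx) (h x hxA)
    · intro h x hxA
      by_contra hne
      exact hxA (h (Equiv.Perm.mem_support.mpr hne))

/-- The signed sum over collections of pairwise vertex-disjoint
directed cycles (length ≥ 1, loops allowed) on `V \ {r}` of
`(−1)^{#cycles} ∏ M`-weights equals `det(Id − M⁽ʳ⁾)`.

A collection of disjoint cycles on `V \ {r}` is encoded by its (finite) support
`A` together with a permutation `π` of `V \ {r}` fixing every point outside
`A`: the cycles of the collection are the cycles of `π` inside `A`, fixed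
points of `π` belonging to `A` being loops (cycles of length 1).  The number
of cycles is `π.cycleFactorsFinset.card` (cycles of length ≥ 2) plus the
number of fixed points of `π` inside `A` (loops). -/
theorem signed_cycle_sum_eq_det
    {V : Type*} [Fintype V] [DecidableEq V]
    (M : Matrix V V ℝ) (r : V) :
    ((1 : Matrix {v : V // v ≠ r} {v : V // v ≠ r} ℝ) -
        Matrix.of (fun i j : {v : V // v ≠ r} => M i.1 j.1)).det =
      ∑ A : Finset {v : V // v ≠ r}, ∑ π : Equiv.Perm {v : V // v ≠ r},
        if (∀ x ∉ A, π x = x) then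
          (-1 : ℝ) ^ (π.cycleFactorsFinset.card + (A.filter fun x => π x = x).card) *
            ∏ x ∈ A, M x.1 (π x).1
        else 0 := by
  classical
  set N : Matrix {v : V // v ≠ r} {v : V // v ≠ r} ℝ :=
    Matrix.of (fun i j : {v : V // v ≠ r} => M i.1 j.1) with hN
  rw [← Matrix.det_transpose, Matrix.det_apply', Finset.sum_comm]
  refine Finset.sum_congr rfl fun π _ => ?_
  have hkey := key N π
  have hprod : ∏ i, (1 - N).transpose (π i) i = ∏ i, (1 - N) i (π i) :=
    Finset.prod_congr rfl fun i _ => rfl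
  rw [hprod, hkey]
  exact Finset.sum_congr rfl fun A _ => rfl
end

section
/- Let w = (w_0, ..., w_m) be a covering path of a finite connected graph G (it visits all vertices and m = τ_{|V|} is the first time all vertices are visited). Then FirstEntranceTree(w), the directed graph on V with root w_0 and edges (w_{τ_k}, w_{τ_k − 1}) for 2 ≤ k ≤ |V| (where τ_k is the first time the path has visited k distinct vertices), is a spanning tree of G rooted at w_0 with all edges directed toward the root: every vertex u ≠ w_0 has exactly one outgoing edge and following outgoing edges from any vertex reaches w_0. -/
/-- For a covering path `w = (w 0, …, w m)` of a finite connected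
graph `G` (it visits every vertex, and `m` is the first time this happens),
the first-entrance tree — which assigns to every vertex `u ≠ w 0` the parent
`w (τ_u − 1)`, where `τ_u` is the first time `w` visits `u` — is a spanning
tree of `G` rooted at `w 0` with all edges directed toward the root: every
`u ≠ w 0` has exactly one outgoing edge, these edges are edges of `G`, and
following the parent map from any vertex reaches `w 0`. -/
theorem firstEntranceTree_is_rooted_spanning_tree
    {V : Type*} [Fintype V] [DecidableEq V] [Nonempty V]
    (G : SimpleGraph V) (hconn : G.Connected)
    (w : ℕ → V) (m : ℕ)
    (hpath : ∀ j < m, G.Adj (w j) (w (j + 1)))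
    (hcov : ∀ v : V, ∃ j ≤ m, w j = v)
    (hmin : ∀ j < m, w m ≠ w j)
    (hex : ∀ v : V, ∃ j, w j = v) :
    IsRootedSpanningTree G (fun u => w (Nat.find (hex u) - 1)) (w 0) := by
  have hspec : ∀ u, w (Nat.find (hex u)) = u := fun u => Nat.find_spec (hex u)
  have hle : ∀ u, Nat.find (hex u) ≤ m := by
    intro u
    obtain ⟨j, hj, hwj⟩ := hcov u
    exact le_trans (Nat.find_le hwj) hj
  have hpos : ∀ u, u ≠ w 0 → 0 < Nat.find (hex u) := by
    intro u hu
    rcases Nat.eq_zero_or_pos (Nat.find (hex u)) with h | h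
    · have := hspec u
      rw [h] at this
      exact absurd this.symm hu
    · exact h
  refine ⟨?_, ?_, ?_⟩
  · have h0 : Nat.find (hex (w 0)) = 0 := Nat.eq_zero_of_le_zero (Nat.find_le rfl)
    simp [h0]
  · intro u hu
    have h1 := hpos u hu
    have h2 := hle u
    have hlt : Nat.find (hex u) - 1 < m := by omega
    have := hpath _ hlt
    rw [Nat.sub_add_cancel h1, hspec u] at this
    exact this.symm
  · have reach : ∀ n u, Nat.find (hex u) = n →
        ∃ k : ℕ, (fun u => w (Nat.find (hex u) - 1))^[k] u = w 0 := by
      intro n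
      induction n using Nat.strong_induction_on with
      | _ n ih =>
        intro u hn
        by_cases hu : u = w 0
        · exact ⟨0, by simp [hu]⟩
        · have h1 := hpos u hu
          have hlt : Nat.find (hex (w (Nat.find (hex u) - 1))) < n := by
            have : Nat.find (hex (w (Nat.find (hex u) - 1))) ≤ Nat.find (hex u) - 1 :=
              Nat.find_le rfl
            omega
          obtain ⟨k, hk⟩ := ih _ hlt _ rfl
          exact ⟨k + 1, by rw [Function.iterate_succ_apply]; exact hk⟩
    exact fun u => reach _ u rfl
end

section
/- The map Heap from paths starting at r to collections of heaps, sending a path w = (w_0, ..., w_m) to the family (Heap_u(w))_{u ∈ V} where Heap_u(w) is the list of edges (w_{j+1}, w_j) for 0 ≤ j ≤ m−1 with w_{j+1} = u taken in path order, is injective: two distinct paths starting at r have distinct heap collections. -/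
/-- The heap at vertex `u` of a path encoded as a list `l = [w_0, …, w_m]`:
the list of reversed steps `(w_{j+1}, w_j)` with `w_{j+1} = u`, in path order. -/
def heapAt {V : Type*} [DecidableEq V] (u : V) (l : List V) : List (V × V) :=
  (l.tail.zip l).filter (fun e => e.1 = u)

open List

private lemma snoc_zip {V : Type*} :
    ∀ (m : List V) (c x : V),
      (m ++ [x]).zip (c :: (m ++ [x]))
        = m.zip (c :: m) ++ [(x, (c :: m).getLast (List.cons_ne_nil _ _))] := by
  intro m
  induction m with
  | nil => intro c x; simp
  | cons d m ih =>
      intro c x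
      simp only [List.cons_append, List.zip_cons_cons, ih d x]
      simp [List.getLast_cons]

private lemma map_snd_zip_tail {V : Type*} :
    ∀ (m : List V) (c : V), (m.zip (c :: m)).map Prod.snd = (c :: m).dropLast := by
  intro m
  induction m with
  | nil => intro c; simp
  | cons d m ih =>
      intro c
      simp only [List.zip_cons_cons, List.map_cons, ih d]
      simp

private lemma countP_sum {V : Type*} [Fintype V] [DecidableEq V]
    (q : V × V → Bool) (z : List (V × V)) :
    z.countP q = ∑ v : V, (z.filter (fun e => e.1 = v)).countP q := by
  induction z with
  | nil => simp
  | cons e z ih =>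
      have h : ∀ v, ((e :: z).filter (fun e' => e'.1 = v)).countP q
          = (z.filter (fun e' => e'.1 = v)).countP q
            + if e.1 = v then (if q e then 1 else 0) else 0 := by
        intro v
        by_cases hv : e.1 = v <;> simp [List.filter_cons, List.countP_cons, hv]
      simp only [h]
      rw [Finset.sum_add_distrib, Finset.sum_ite_eq, List.countP_cons, ← ih]
      simp

private lemma heap_len {V : Type*} [Fintype V] [DecidableEq V] (c : V) (t : List V) :
    t.length = ∑ v : V, (heapAt v (c :: t)).length := by
  have h := countP_sum (fun _ => (true : Bool)) (t.zip (c :: t))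
  simp only [List.countP_true] at h
  have hz : (t.zip (c :: t)).length = t.length := by
    rw [List.length_zip]; simp
  rw [← hz, h]
  rfl

private lemma heap_count_fst {V : Type*} [Fintype V] [DecidableEq V] (c u : V) (t : List V) :
    (heapAt u (c :: t)).length = t.count u := by
  have hmap : (t.zip (c :: t)).map Prod.fst = t :=
    List.map_fst_zip (by simp)
  calc (heapAt u (c :: t)).length
      = (t.zip (c :: t)).countP (fun e => decide (e.1 = u)) := by
        rw [heapAt, List.tail_cons, List.countP_eq_length_filter]
    _ = ((t.zip (c :: t)).map Prod.fst).countP (fun x => decide (x = u)) := by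
        rw [List.countP_map]; rfl
    _ = t.count u := by rw [hmap]; rfl

private lemma heap_count_snd {V : Type*} [Fintype V] [DecidableEq V] (c u : V) (t : List V) :
    (c :: t).dropLast.count u
      = ∑ v : V, (heapAt v (c :: t)).countP (fun e => e.2 = u) := by
  rw [← map_snd_zip_tail t c, List.count, List.countP_map]
  rw [countP_sum ((· == u) ∘ Prod.snd) (t.zip (c :: t))]
  apply Finset.sum_congr rfl
  intro v _
  simp only [heapAt, List.tail_cons]
  congr 1

private lemma key_s11 {V : Type*} [Fintype V] [DecidableEq V] :
    ∀ (n : ℕ) (r : V) (l₁ l₂ : List V), l₁.length ≤ n →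
      l₁.head? = some r → l₂.head? = some r →
      (∀ u : V, heapAt u l₁ = heapAt u l₂) → l₁ = l₂ := by
  intro n
  induction n with
  | zero =>
      intro r l₁ l₂ hn h1 h2 _
      cases l₁ <;> simp_all
  | succ n ih =>
      intro r l₁ l₂ hn h1 h2 hheap
      obtain ⟨t₁, rfl⟩ : ∃ t, l₁ = r :: t := by
        cases l₁ with
        | nil => simp at h1
        | cons a t => simp at h1; exact ⟨t, by rw [h1]⟩
      obtain ⟨t₂, rfl⟩ : ∃ t, l₂ = r :: t := by
        cases l₂ with
        | nil => simp at h2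
        | cons a t => simp at h2; exact ⟨t, by rw [h2]⟩
      have hlen : t₁.length = t₂.length := by
        rw [heap_len r t₁, heap_len r t₂]
        exact Finset.sum_congr rfl fun v _ => by rw [hheap v]
      by_cases ht1 : t₁ = []
      · subst ht1
        have : t₂ = [] := List.eq_nil_of_length_eq_zero (by simpa using hlen.symm)
        rw [this]
      · have ht2 : t₂ ≠ [] := by
          intro h
          apply ht1
          apply List.eq_nil_of_length_eq_zero
          rw [hlen, h]
          rfl
        obtain ⟨s₁, y₁, rfl⟩ : ∃ s y, t₁ = s ++ [y] :=
          ⟨_, _, (List.dropLast_append_getLast ht1).symm⟩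
        obtain ⟨s₂, y₂, rfl⟩ : ∃ s y, t₂ = s ++ [y] :=
          ⟨_, _, (List.dropLast_append_getLast ht2).symm⟩
        -- counts of tails agree
        have hct : ∀ u, (s₁ ++ [y₁]).count u = (s₂ ++ [y₂]).count u := by
          intro u
          rw [← heap_count_fst r u, ← heap_count_fst r u, hheap u]
        -- counts of dropLasts agree
        have hcd : ∀ u, (r :: s₁).count u = (r :: s₂).count u := by
          intro u
          have h1' : (r :: (s₁ ++ [y₁])).dropLast = r :: s₁ := by
            rw [show r :: (s₁ ++ [y₁]) = (r :: s₁) ++ [y₁] from rfl, List.dropLast_concat]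
          have h2' : (r :: (s₂ ++ [y₂])).dropLast = r :: s₂ := by
            rw [show r :: (s₂ ++ [y₂]) = (r :: s₂) ++ [y₂] from rfl, List.dropLast_concat]
          have := heap_count_snd r u (s₁ ++ [y₁])
          rw [h1'] at this
          have h2'' := heap_count_snd r u (s₂ ++ [y₂])
          rw [h2'] at h2''
          rw [this, h2'']
          exact Finset.sum_congr rfl fun v _ => by rw [hheap v]
        -- last elements agree
        have hy : y₁ = y₂ := by
          have hr1 : ((r :: s₁) ++ [y₁]).count y₁ = ((r :: s₂) ++ [y₂]).count y₁ := by
            show (r :: (s₁ ++ [y₁])).count y₁ = (r :: (s₂ ++ [y₂])).count y₁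
            simp only [List.count_cons, hct y₁]
          rw [List.count_append, List.count_append, hcd y₁] at hr1
          have hsing : ([y₁] : List V).count y₁ = ([y₂] : List V).count y₁ := by omega
          by_contra hne
          simp [List.count_singleton, hne] at hsing
          exact hne hsing.symm
        subst hy
        -- heap decomposition
        have hdecomp : ∀ (s : List V) (u : V),
            heapAt u (r :: (s ++ [y₁]))
              = heapAt u (r :: s)
                ++ (if y₁ = u then [(y₁, (r :: s).getLast (List.cons_ne_nil _ _))] else []) := by
          intro s u
          simp only [heapAt, List.tail_cons]
          rw [snoc_zip s r y₁, List.filter_append]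
          congr 1
          by_cases h : y₁ = u <;> simp [h]
        have hh' : ∀ u, heapAt u (r :: s₁) = heapAt u (r :: s₂) := by
          intro u
          have h := hheap u
          rw [hdecomp s₁ u, hdecomp s₂ u] at h
          by_cases hu : y₁ = u
          · simp only [hu, if_true] at h
            exact (List.append_inj' h (by simp)).1
          · simpa [hu] using h
        have hlen' : (r :: s₁).length ≤ n := by
          simp only [List.length_cons, List.length_append, List.length_singleton] at hn ⊢
          omega
        have := ih r (r :: s₁) (r :: s₂) hlen' rfl rfl hh'
        injection this with _ hs
        rw [hs]

/-- The map `Heap` from paths starting at `r` to collections of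
heaps is injective: two paths starting at `r` with the same heap collection
are equal. -/
theorem heap_injective_on_paths
    {V : Type*} [Fintype V] [DecidableEq V]
    (G : SimpleGraph V) (r : V)
    (l₁ l₂ : List V)
    (h₁chain : List.Chain' G.Adj l₁) (h₂chain : List.Chain' G.Adj l₂)
    (h₁head : l₁.head? = some r) (h₂head : l₂.head? = some r)
    (hheap : ∀ u : V, heapAt u l₁ = heapAt u l₂) :
    l₁ = l₂ :=
  key_s11 l₁.length r l₁ l₂ le_rfl h₁head h₂head hheap
end

section
/- Stochastic golf sequence termination: let ←M be an irreducible Markov kernel on finite V, HoleSet ⊆ V with |HoleSet| ≥ N, and starting points S_1,...,S_N ∉ HoleSet. Run N successive Markov chains with kernel ←M, the j-th started at S_j and stopped at the first hitting time of HoleSet minus the final points of the previous j−1 chains. Then almost surely all N stopping times are finite, so the resulting random sequence of stopped paths is a golf sequence. Moreover if N = |HoleSet| − 1, then ∑_{f ∈ HoleSet} P(the hole f remains unoccupied) = 1. -/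
/-- Golf sequence with respect to the positivity graph of a kernel `K`:
the `j`-th path starts at `S j`, takes only steps of positive kernel weight,
its final points `F j` are distinct elements of `HoleSet`, and each path stops
exactly at the first time it hits a hole not occupied by a previous path. -/
def IsGolfSequenceKer {V : Type*} [DecidableEq V] (K : V → V → ℝ)
    (HoleSet : Finset V) {N : ℕ} (S : Fin N → V) (w : Fin N → List V) : Prop :=
  ∃ F : Fin N → V,
    Function.Injective F ∧
    (∀ j, w j ≠ [] ∧ List.Chain' (fun a b => 0 < K a b) (w j) ∧
      (w j).head? = some (S j) ∧
      (w j).getLast? = some (F j) ∧ F j ∈ HoleSet ∧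
      (∀ v ∈ (w j).dropLast, v ∈ HoleSet → ∃ k, k < j ∧ F k = v))

/-- The probability (product of transition probabilities) of a finite path. -/
def pathWeight {V : Type*} (K : V → V → ℝ) (l : List V) : ℝ :=
  ((l.zip l.tail).map (fun e => K e.1 e.2)).prod


open ENNReal
set_option linter.unusedSectionVars false
set_option maxHeartbeats 1000000

namespace Golf

variable {V : Type*} [Fintype V] [DecidableEq V]

/-- first-hitting path of `A` started at `x`. -/
def FH (K : V → V → ℝ) (A : Finset V) (x : V) (l : List V) : Prop :=
  l ≠ [] ∧ l.Chain' (fun a b => 0 < K a b) ∧ l.head? = some x ∧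
    (∀ v ∈ l.dropLast, v ∉ A) ∧ ∃ a ∈ A, l.getLast? = some a

lemma pathWeight_singleton (K : V → V → ℝ) (x : V) : pathWeight K [x] = 1 := by
  simp [pathWeight]

lemma pathWeight_cons (K : V → V → ℝ) (x y : V) (r : List V) :
    pathWeight K (x :: y :: r) = K x y * pathWeight K (y :: r) := by
  simp [pathWeight]

lemma pathWeight_nonneg (hK : ∀ x y, 0 ≤ K x y) (l : List V) : 0 ≤ pathWeight K l := by
  apply List.prod_nonneg
  intro a ha
  simp only [List.mem_map] at ha
  obtain ⟨e, _, rfl⟩ := ha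
  exact hK _ _

lemma fh_singleton {K : V → V → ℝ} {A : Finset V} {x : V} (hx : x ∈ A) (l : List V) :
    FH K A x l ↔ l = [x] := by
  constructor
  · rintro ⟨hne, hch, hhd, hdl, a, ha, hl⟩
    match l, hne with
    | [b], _ =>
      simp only [List.head?_cons, Option.some.injEq] at hhd
      rw [hhd]
    | b :: c :: r, _ =>
      exfalso
      simp only [List.head?_cons, Option.some.injEq] at hhd
      subst hhd
      exact hdl b (by simp [List.dropLast_cons₂]) hx
  · rintro rfl
    exact ⟨by simp, List.isChain_singleton _, by simp, by simp, x, hx, by simp⟩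

lemma fh_cons {K : V → V → ℝ} {A : Finset V} {x : V} (hx : x ∉ A) (l : List V) :
    FH K A x l ↔ ∃ y r, l = x :: y :: r ∧ 0 < K x y ∧ FH K A y (y :: r) := by
  constructor
  · rintro ⟨hne, hch, hhd, hdl, a, ha, hl⟩
    match l, hne with
    | [b], _ =>
      exfalso
      simp only [List.head?_cons, Option.some.injEq] at hhd
      simp only [List.getLast?_singleton, Option.some.injEq] at hl
      subst hhd; subst hl
      exact hx ha
    | b :: c :: r, _ =>
      simp only [List.head?_cons, Option.some.injEq] at hhd
      subst hhd
      replace hch := List.isChain_cons_cons.mp hch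
      refine ⟨c, r, rfl, hch.1, ?_, hch.2, rfl, ?_, a, ha, ?_⟩
      · simp
      · intro v hv
        exact hdl v (by simp [List.dropLast_cons₂, hv])
      · rwa [List.getLast?_cons_cons] at hl
  · rintro ⟨y, r, rfl, hK, hne, hch, hhd, hdl, a, ha, hl⟩
    refine ⟨by simp, ?_, by simp, ?_, a, ha, ?_⟩
    · exact List.isChain_cons_cons.mpr ⟨hK, hch⟩
    · intro v hv
      simp only [List.dropLast_cons₂, List.mem_cons] at hv
      rcases hv with rfl | hv
      · exact hx
      · exact hdl v hv
    · rwa [List.getLast?_cons_cons]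

lemma fh_head {K : V → V → ℝ} {A : Finset V} {x : V} {l : List V} (h : FH K A x l) :
    l.head? = some x := h.2.2.1

end Golf

namespace Golf

variable {V : Type*} [Fintype V] [DecidableEq V]

/-- probability of avoiding `A` for `n` steps (including time 0), in `ℝ≥0∞`. -/
noncomputable def avoidP (K : V → V → ℝ) (A : Finset V) : ℕ → V → ℝ≥0∞
  | 0 => fun x => if x ∈ A then 0 else 1
  | (n+1) => fun x => if x ∈ A then 0 else ∑ y, ENNReal.ofReal (K x y) * avoidP K A n y

variable {K : V → V → ℝ} {A : Finset V}

lemma rowsum_one (hKnonneg : ∀ x y, 0 ≤ K x y) (hKstoch : ∀ x, ∑ y, K x y = 1) (x : V) :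
    ∑ y, ENNReal.ofReal (K x y) = 1 := by
  rw [← ENNReal.ofReal_sum_of_nonneg (fun i _ => hKnonneg x i), hKstoch, ENNReal.ofReal_one]

lemma avoidP_le_one (hKnonneg : ∀ x y, 0 ≤ K x y) (hKstoch : ∀ x, ∑ y, K x y = 1) :
    ∀ n x, avoidP K A n x ≤ 1 := by
  intro n
  induction n with
  | zero => intro x; simp only [avoidP]; split <;> simp
  | succ n ih =>
    intro x
    simp only [avoidP]
    split
    · exact zero_le_one
    · calc ∑ y, ENNReal.ofReal (K x y) * avoidP K A n y
          ≤ ∑ y, ENNReal.ofReal (K x y) * 1 :=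
            Finset.sum_le_sum fun y _ => mul_le_mul_right (ih y) _
        _ = 1 := by simpa using rowsum_one hKnonneg hKstoch x

lemma avoidP_mem (n : ℕ) {x : V} (hx : x ∈ A) : avoidP K A n x = 0 := by
  cases n <;> simp [avoidP, hx]

lemma avoidP_antitone (hKnonneg : ∀ x y, 0 ≤ K x y) (hKstoch : ∀ x, ∑ y, K x y = 1) :
    ∀ n x, avoidP K A (n+1) x ≤ avoidP K A n x := by
  intro n
  induction n with
  | zero =>
    intro x
    by_cases hx : x ∈ A
    · simp [avoidP_mem, hx]
    · simp only [avoidP, if_neg hx]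
      calc ∑ y, ENNReal.ofReal (K x y) * (if y ∈ A then (0:ℝ≥0∞) else 1)
          ≤ ∑ y, ENNReal.ofReal (K x y) * 1 :=
            Finset.sum_le_sum fun y _ => mul_le_mul_right (by split <;> simp) _
        _ = 1 := by simpa using rowsum_one hKnonneg hKstoch x
  | succ n ih =>
    intro x
    by_cases hx : x ∈ A
    · simp [avoidP_mem, hx]
    · show (if x ∈ A then 0 else ∑ y, ENNReal.ofReal (K x y) * avoidP K A (n+1) y)
          ≤ (if x ∈ A then 0 else ∑ y, ENNReal.ofReal (K x y) * avoidP K A n y)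
      rw [if_neg hx, if_neg hx]
      exact Finset.sum_le_sum fun y _ => mul_le_mul_right (ih y) _

lemma avoidP_le_of_le (hmn : m ≤ n) (hKnonneg : ∀ x y, 0 ≤ K x y)
    (hKstoch : ∀ x, ∑ y, K x y = 1) (x : V) : avoidP K A n x ≤ avoidP K A m x := by
  induction n with
  | zero => simp_all
  | succ n ih =>
    rcases Nat.lt_or_ge m (n+1) with h | h
    · exact le_trans (avoidP_antitone hKnonneg hKstoch n x) (ih (Nat.lt_succ_iff.mp h))
    · have : m = n + 1 := le_antisymm hmn h
      subst this; exact le_rfl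

lemma avoidP_add_le (C : ℝ≥0∞) (t : ℕ) (hC : ∀ y, avoidP K A t y ≤ C) :
    ∀ s x, avoidP K A (s + t) x ≤ avoidP K A s x * C := by
  intro s
  induction s with
  | zero =>
    intro x
    by_cases hx : x ∈ A
    · simp [avoidP_mem, hx]
    · simpa [avoidP, if_neg hx] using hC x
  | succ s ih =>
    intro x
    by_cases hx : x ∈ A
    · simp [avoidP_mem, hx]
    · have hrw : s + 1 + t = (s + t) + 1 := by omega
      rw [hrw]
      simp only [avoidP, if_neg hx, Finset.sum_mul]
      exact Finset.sum_le_sum fun y _ => by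
        rw [mul_assoc]; exact mul_le_mul_right (ih y) _

end Golf

namespace Golf

variable {V : Type*} [Fintype V] [DecidableEq V] {K : V → V → ℝ} {A : Finset V}

lemma matpow_nonneg (hKnonneg : ∀ x y, 0 ≤ K x y) :
    ∀ n (x y : V), 0 ≤ ((Matrix.of K) ^ n) x y := by
  intro n
  induction n with
  | zero => intro x y; simp [Matrix.one_apply]; split <;> norm_num
  | succ n ih =>
    intro x y
    rw [pow_succ', Matrix.mul_apply]
    exact Finset.sum_nonneg fun z _ => mul_nonneg (hKnonneg x z) (ih z y)

lemma avoidP_add_matpow_le (hKnonneg : ∀ x y, 0 ≤ K x y) (hKstoch : ∀ x, ∑ y, K x y = 1)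
    {a : V} (ha : a ∈ A) :
    ∀ n x, avoidP K A n x + ENNReal.ofReal (((Matrix.of K) ^ n) x a) ≤ 1 := by
  have hrow : ∀ n x, ∑ y, ENNReal.ofReal (((Matrix.of K) ^ n) x y) = 1 := by
    intro n
    induction n with
    | zero =>
      intro x
      rw [← ENNReal.ofReal_sum_of_nonneg (fun i _ => matpow_nonneg hKnonneg 0 x i)]
      simp [Matrix.one_apply]
    | succ n ih =>
      intro x
      have : ∀ y, ENNReal.ofReal (((Matrix.of K) ^ (n+1)) x y)
          = ∑ z, ENNReal.ofReal (K x z) * ENNReal.ofReal (((Matrix.of K) ^ n) z y) := by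
        intro y
        rw [pow_succ', Matrix.mul_apply]
        simp only [Matrix.of_apply]
        rw [ENNReal.ofReal_sum_of_nonneg (fun z _ => mul_nonneg (hKnonneg x z) (matpow_nonneg hKnonneg n z y))]
        exact Finset.sum_congr rfl fun z _ => ENNReal.ofReal_mul (hKnonneg x z)
      simp only [this]
      rw [Finset.sum_comm]
      calc ∑ z, ∑ y, ENNReal.ofReal (K x z) * ENNReal.ofReal (((Matrix.of K) ^ n) z y)
          = ∑ z, ENNReal.ofReal (K x z) * ∑ y, ENNReal.ofReal (((Matrix.of K) ^ n) z y) := by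
            simp [Finset.mul_sum]
        _ = 1 := by simp only [ih]; simpa using rowsum_one hKnonneg hKstoch x
  intro n
  induction n with
  | zero =>
    intro x
    by_cases hx : x ∈ A
    · simp only [avoidP, if_pos hx, zero_add]
      exact le_trans (ENNReal.ofReal_le_one.mpr (by
        by_cases hxa : x = a <;> simp [Matrix.one_apply, hxa])) le_rfl
    · have hxa : x ≠ a := fun h => hx (h ▸ ha)
      simp [avoidP, if_neg hx, Matrix.one_apply, hxa]
  | succ n ih =>
    intro x
    by_cases hx : x ∈ A
    · simp only [avoidP, if_pos hx, zero_add]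
      calc ENNReal.ofReal (((Matrix.of K) ^ (n+1)) x a)
          ≤ ∑ y, ENNReal.ofReal (((Matrix.of K) ^ (n+1)) x y) :=
            Finset.single_le_sum (f := fun y => ENNReal.ofReal (((Matrix.of K) ^ (n+1)) x y))
              (fun y _ => zero_le) (Finset.mem_univ a)
        _ = 1 := hrow (n+1) x
    · simp only [avoidP, if_neg hx]
      have hsplit : ENNReal.ofReal (((Matrix.of K) ^ (n+1)) x a)
          = ∑ z, ENNReal.ofReal (K x z) * ENNReal.ofReal (((Matrix.of K) ^ n) z a) := by
        rw [pow_succ', Matrix.mul_apply]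
        simp only [Matrix.of_apply]
        rw [ENNReal.ofReal_sum_of_nonneg (fun z _ => mul_nonneg (hKnonneg x z) (matpow_nonneg hKnonneg n z a))]
        exact Finset.sum_congr rfl fun z _ => ENNReal.ofReal_mul (hKnonneg x z)
      rw [hsplit, ← Finset.sum_add_distrib]
      calc ∑ z, (ENNReal.ofReal (K x z) * avoidP K A n z
              + ENNReal.ofReal (K x z) * ENNReal.ofReal (((Matrix.of K) ^ n) z a))
          = ∑ z, ENNReal.ofReal (K x z)
              * (avoidP K A n z + ENNReal.ofReal (((Matrix.of K) ^ n) z a)) := by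
            simp [mul_add]
        _ ≤ ∑ z, ENNReal.ofReal (K x z) * 1 :=
            Finset.sum_le_sum fun z _ => mul_le_mul_right (ih z) _
        _ = 1 := by simpa using rowsum_one hKnonneg hKstoch x

/-- uniform geometric decay of avoidance probability. -/
lemma avoidP_decay (hKnonneg : ∀ x y, 0 ≤ K x y) (hKstoch : ∀ x, ∑ y, K x y = 1)
    (hirr : ∀ x y : V, ∃ n : ℕ, 0 < ((Matrix.of K) ^ n) x y) (hA : A.Nonempty) [Nonempty V] :
    ∃ m : ℕ, ∃ c : ℝ≥0∞, c < 1 ∧ ∀ k x, avoidP K A (k * m) x ≤ c ^ k := by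
  obtain ⟨a, ha⟩ := hA
  have hlt : ∀ x : V, ∃ n, avoidP K A n x < 1 := by
    intro x
    by_cases hx : x ∈ A
    · exact ⟨0, by simp [avoidP_mem, hx]⟩
    · obtain ⟨n, hn⟩ := hirr x a
      refine ⟨n, ?_⟩
      have h2 := avoidP_add_matpow_le hKnonneg hKstoch ha n x
      have hpos : 0 < ENNReal.ofReal (((Matrix.of K) ^ n) x a) := ENNReal.ofReal_pos.mpr hn
      by_contra hcon
      push_neg at hcon
      have h3 : (1 : ℝ≥0∞) + ENNReal.ofReal (((Matrix.of K) ^ n) x a) ≤ 1 + 0 := by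
        simpa using le_trans (add_le_add_left hcon _) h2
      have h4 : ENNReal.ofReal (((Matrix.of K) ^ n) x a) ≤ 0 :=
        (ENNReal.add_le_add_iff_left (by simp)).mp h3
      exact absurd (le_antisymm h4 (zero_le)) hpos.ne'
  choose nf hnf using hlt
  set m := Finset.univ.sup nf with hm
  have hmx : ∀ x, avoidP K A m x < 1 := fun x =>
    lt_of_le_of_lt (avoidP_le_of_le (Finset.le_sup (Finset.mem_univ x)) hKnonneg hKstoch x) (hnf x)
  set c := Finset.univ.sup (fun x => avoidP K A m x) with hc
  have hclt : c < 1 := (Finset.sup_lt_iff (by simp)).mpr (fun x _ => hmx x)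
  have hcb : ∀ x, avoidP K A m x ≤ c := fun x => Finset.le_sup (Finset.mem_univ x)
  refine ⟨m, c, hclt, ?_⟩
  intro k
  induction k with
  | zero => intro x; simpa using avoidP_le_one hKnonneg hKstoch 0 x
  | succ k ih =>
    intro x
    have : (k+1) * m = m + k * m := by ring
    rw [this, pow_succ]
    calc avoidP K A (m + k * m) x ≤ avoidP K A m x * c ^ k :=
          avoidP_add_le (c ^ k) (k * m) ih m x
      _ ≤ c * c ^ k := mul_le_mul_left (hcb x) _
      _ = c ^ k * c := mul_comm _ _

end Golf

namespace Golf

variable {V : Type*} [Fintype V] [DecidableEq V] {K : V → V → ℝ} {A : Finset V}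

open Classical in
/-- total weight of first-hitting paths of length ≤ n+1. -/
noncomputable def gInd (K : V → V → ℝ) (A : Finset V) (x : V) (n : ℕ) : ℝ≥0∞ :=
  ∑' l : List V, if FH K A x l ∧ l.length ≤ n + 1 then ENNReal.ofReal (pathWeight K l) else 0

open Classical in
/-- total weight of first-hitting paths. -/
noncomputable def gFull (K : V → V → ℝ) (A : Finset V) (x : V) : ℝ≥0∞ :=
  ∑' l : List V, if FH K A x l then ENNReal.ofReal (pathWeight K l) else 0

lemma tsum_cons_aux (x : V) (f : List V → ℝ≥0∞) (hf : ∀ l, f l ≠ 0 → ∃ t, l = x :: t) :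
    ∑' l : List V, f l = ∑' t : List V, f (x :: t) := by
  apply tsum_eq_tsum_of_ne_zero_bij (fun t => x :: t.1)
  · intro s t h
    exact Subtype.ext (by simpa using h)
  · intro l hl
    obtain ⟨t, rfl⟩ := hf l hl
    exact ⟨⟨t, hl⟩, rfl⟩
  · intro t
    rfl

open Classical in
lemma gInd_succ (hKnonneg : ∀ x y, 0 ≤ K x y) {x : V} (hx : x ∉ A) (n : ℕ) :
    gInd K A x (n + 1) = ∑ y, ENNReal.ofReal (K x y) * gInd K A y n := by
  rw [gInd]
  rw [tsum_cons_aux x _ (by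
    intro l hl
    have : FH K A x l := by by_contra h; simp [h] at hl
    obtain ⟨y, r, rfl, _, _⟩ := (fh_cons hx l).mp this
    exact ⟨y :: r, rfl⟩)]
  have key : ∀ t : List V,
      (if FH K A x (x :: t) ∧ (x :: t).length ≤ n + 1 + 1 then ENNReal.ofReal (pathWeight K (x :: t)) else 0)
      = ∑ y, (if FH K A y t ∧ t.length ≤ n + 1 then ENNReal.ofReal (K x y) * ENNReal.ofReal (pathWeight K t) else 0) := by
    intro t
    match t with
    | [] =>
      rw [if_neg, Finset.sum_eq_zero]
      · intro y _
        rw [if_neg]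
        rintro ⟨⟨hne, -⟩, -⟩
        exact hne rfl
      · rintro ⟨hfh, -⟩
        obtain ⟨y, r, heq, -, -⟩ := (fh_cons hx _).mp hfh
        simp at heq
    | y₀ :: r =>
      have hsum : ∑ y, (if FH K A y (y₀ :: r) ∧ (y₀ :: r).length ≤ n + 1 then
          ENNReal.ofReal (K x y) * ENNReal.ofReal (pathWeight K (y₀ :: r)) else 0)
          = (if FH K A y₀ (y₀ :: r) ∧ (y₀ :: r).length ≤ n + 1 then
          ENNReal.ofReal (K x y₀) * ENNReal.ofReal (pathWeight K (y₀ :: r)) else 0) := by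
        apply Finset.sum_eq_single
        · intro y _ hy
          rw [if_neg]
          rintro ⟨hfh, -⟩
          have := fh_head hfh
          simp only [List.head?_cons, Option.some.injEq] at this
          exact hy this.symm
        · intro h
          exact absurd (Finset.mem_univ y₀) h
      rw [hsum]
      by_cases hcond : FH K A y₀ (y₀ :: r) ∧ (y₀ :: r).length ≤ n + 1
      · rw [if_pos hcond]
        by_cases hpos : 0 < K x y₀
        · rw [if_pos, pathWeight_cons, ENNReal.ofReal_mul (hKnonneg x y₀)]
          refine ⟨(fh_cons hx _).mpr ⟨y₀, r, rfl, hpos, hcond.1⟩, ?_⟩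
          simpa using Nat.succ_le_succ hcond.2
        · have hz : K x y₀ = 0 := le_antisymm (not_lt.mp hpos) (hKnonneg x y₀)
          rw [if_neg, hz, ENNReal.ofReal_zero, zero_mul]
          rintro ⟨hfh, -⟩
          obtain ⟨y, r', heq, hp, -⟩ := (fh_cons hx _).mp hfh
          simp only [List.cons.injEq, true_and] at heq
          obtain ⟨rfl, rfl⟩ := heq
          exact hpos hp
      · rw [if_neg, if_neg hcond]
        rintro ⟨hfh, hlen⟩
        obtain ⟨y, r', heq, hp, hfh'⟩ := (fh_cons hx _).mp hfh
        simp only [List.cons.injEq, true_and] at heq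
        obtain ⟨rfl, rfl⟩ := heq
        exact hcond ⟨hfh', by simpa using Nat.succ_le_succ_iff.mp (by simpa using hlen)⟩
  rw [tsum_congr key, Summable.tsum_finsetSum (fun y _ => ENNReal.summable)]
  apply Finset.sum_congr rfl
  intro y _
  rw [gInd, ← ENNReal.tsum_mul_left]
  apply tsum_congr
  intro t
  split <;> simp

open Classical in
lemma gInd_mem (hx : x ∈ A) (n : ℕ) : gInd K A x n = 1 := by
  rw [gInd, tsum_eq_single [x]]
  · rw [if_pos ⟨(fh_singleton hx [x]).mpr rfl, by simp⟩, pathWeight_singleton, ENNReal.ofReal_one]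
  · intro l hl
    rw [if_neg]
    rintro ⟨hfh, -⟩
    exact hl ((fh_singleton hx l).mp hfh)

lemma gInd_add_avoidP (hKnonneg : ∀ x y, 0 ≤ K x y) (hKstoch : ∀ x, ∑ y, K x y = 1) :
    ∀ n (x : V), gInd K A x n + avoidP K A n x = 1 := by
  intro n
  induction n with
  | zero =>
    intro x
    by_cases hx : x ∈ A
    · rw [gInd_mem hx, avoidP_mem 0 hx, add_zero]
    · have h0 : gInd K A x 0 = 0 := by
        classical
        rw [gInd, ENNReal.tsum_eq_zero]
        intro l
        rw [if_neg]
        rintro ⟨hfh, hlen⟩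
        obtain ⟨y, r, rfl, -, -⟩ := (fh_cons hx l).mp hfh
        simp at hlen
      rw [h0, zero_add]
      simp [avoidP, hx]
  | succ n ih =>
    intro x
    by_cases hx : x ∈ A
    · rw [gInd_mem hx, avoidP_mem _ hx, add_zero]
    · rw [gInd_succ hKnonneg hx n]
      show _ + (if x ∈ A then 0 else ∑ y, ENNReal.ofReal (K x y) * avoidP K A n y) = 1
      rw [if_neg hx, ← Finset.sum_add_distrib]
      calc ∑ y, (ENNReal.ofReal (K x y) * gInd K A y n + ENNReal.ofReal (K x y) * avoidP K A n y)
          = ∑ y, ENNReal.ofReal (K x y) * (gInd K A y n + avoidP K A n y) := by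
            simp [mul_add]
        _ = ∑ y, ENNReal.ofReal (K x y) := by
            apply Finset.sum_congr rfl; intro y _; rw [ih y, mul_one]
        _ = 1 := rowsum_one hKnonneg hKstoch x

lemma gInd_le_one (hKnonneg : ∀ x y, 0 ≤ K x y) (hKstoch : ∀ x, ∑ y, K x y = 1) (n : ℕ) (x : V) :
    gInd K A x n ≤ 1 := by
  rw [← gInd_add_avoidP hKnonneg hKstoch n x]
  exact le_self_add

open Classical in
lemma gInd_le_gFull (n : ℕ) (x : V) : gInd K A x n ≤ gFull K A x := by
  apply ENNReal.tsum_le_tsum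
  intro l
  split
  · rw [if_pos (by tauto)]
  · exact zero_le

open Classical in
lemma gFull_le_one (hKnonneg : ∀ x y, 0 ≤ K x y) (hKstoch : ∀ x, ∑ y, K x y = 1) (x : V) :
    gFull K A x ≤ 1 := by
  rw [gFull, ENNReal.tsum_eq_iSup_sum]
  apply iSup_le
  intro s
  set n := s.sup List.length with hn
  calc ∑ l ∈ s, (if FH K A x l then ENNReal.ofReal (pathWeight K l) else 0)
      ≤ ∑ l ∈ s, (if FH K A x l ∧ l.length ≤ n + 1 then ENNReal.ofReal (pathWeight K l) else 0) := by
        apply Finset.sum_le_sum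
        intro l hl
        split
        · rw [if_pos ⟨by assumption, le_trans (Finset.le_sup hl) (Nat.le_succ n)⟩]
        · exact zero_le
    _ ≤ gInd K A x n := ENNReal.sum_le_tsum s
    _ ≤ 1 := gInd_le_one hKnonneg hKstoch n x

/-- MAIN single-path lemma: total first-hitting weight is 1. -/
lemma gFull_eq_one [Nonempty V] (hKnonneg : ∀ x y, 0 ≤ K x y) (hKstoch : ∀ x, ∑ y, K x y = 1)
    (hirr : ∀ x y : V, ∃ n : ℕ, 0 < ((Matrix.of K) ^ n) x y) (hA : A.Nonempty) (x : V) :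
    gFull K A x = 1 := by
  refine le_antisymm (gFull_le_one hKnonneg hKstoch x) ?_
  obtain ⟨m, c, hc, hdec⟩ := avoidP_decay hKnonneg hKstoch hirr hA
  apply ENNReal.le_of_forall_pos_le_add
  intro ε hε _
  have htend : Filter.Tendsto (fun k : ℕ => c ^ k) Filter.atTop (nhds 0) :=
    ENNReal.tendsto_pow_atTop_nhds_zero_of_lt_one hc
  have : ∀ᶠ k in Filter.atTop, c ^ k < (ε : ℝ≥0∞) := by
    apply htend.eventually_lt_const
    exact_mod_cast hε
  obtain ⟨k, hk⟩ := this.exists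
  calc (1 : ℝ≥0∞) = gInd K A x (k * m) + avoidP K A (k * m) x :=
        (gInd_add_avoidP hKnonneg hKstoch (k * m) x).symm
    _ ≤ gFull K A x + (ε : ℝ≥0∞) :=
        add_le_add (gInd_le_gFull (k * m) x) (le_trans (hdec k x) hk.le)

end Golf

namespace Golf

variable {V : Type*} [Fintype V] [DecidableEq V] {K : V → V → ℝ}

/-- holes occupied before path `j`. -/
def occ {N : ℕ} (w : Fin N → List V) (S : Fin N → V) (j : Fin N) : Finset V :=
  (Finset.univ.filter (fun k => k < j)).image (fun k => (w k).getLastD (S k))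

/-- auxiliary golf property: each path first-hits the currently free holes. -/
def Gaux (K : V → V → ℝ) (A : Finset V) {N : ℕ} (S : Fin N → V) (w : Fin N → List V) : Prop :=
  ∀ j, FH K (A \ occ w S j) (S j) (w j)

lemma occ_zero {N : ℕ} (w : Fin (N+1) → List V) (S : Fin (N+1) → V) :
    occ w S 0 = ∅ := by
  rw [occ, Finset.filter_false_of_mem, Finset.image_empty]
  intro k _
  exact Fin.not_lt_zero k

lemma occ_succ {N : ℕ} (w : Fin (N+1) → List V) (S : Fin (N+1) → V) (j : Fin N) :
    occ w S j.succ
      = insert ((w 0).getLastD (S 0)) (occ (w ∘ Fin.succ) (S ∘ Fin.succ) j) := by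
  ext v
  simp only [occ, Finset.mem_insert, Finset.mem_image, Finset.mem_filter, Finset.mem_univ,
    true_and, Function.comp_apply]
  constructor
  · rintro ⟨k, hk, rfl⟩
    induction k using Fin.cases with
    | zero => exact Or.inl rfl
    | succ k' => exact Or.inr ⟨k', by rwa [Fin.succ_lt_succ_iff] at hk, rfl⟩
  · rintro (h | ⟨k', hk', rfl⟩)
    · exact ⟨0, j.succ_pos, h.symm⟩
    · exact ⟨k'.succ, by rwa [Fin.succ_lt_succ_iff], rfl⟩

lemma sdiff_insert' (A : Finset V) (a : V) (s : Finset V) :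
    A \ insert a s = (A \ {a}) \ s := by
  ext v
  simp only [Finset.mem_sdiff, Finset.mem_insert, Finset.mem_singleton]
  tauto

lemma gaux_rec {N : ℕ} (A : Finset V) (S : Fin (N+1) → V) (w : Fin (N+1) → List V) :
    Gaux K A S w ↔ FH K A (S 0) (w 0) ∧
      Gaux K (A \ {(w 0).getLastD (S 0)}) (S ∘ Fin.succ) (w ∘ Fin.succ) := by
  constructor
  · intro h
    refine ⟨by simpa [occ_zero] using h 0, fun j => ?_⟩
    have := h j.succ
    rwa [occ_succ, sdiff_insert'] at this
  · rintro ⟨h0, h⟩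
    intro j
    induction j using Fin.cases with
    | zero => simpa [occ_zero] using h0
    | succ j' =>
      have := h j'
      rw [← sdiff_insert', ← occ_succ] at this
      exact this

lemma getLastD_mem_of_fh {A : Finset V} {x d : V} {l : List V} (h : FH K A x l) :
    l.getLastD d ∈ A := by
  obtain ⟨-, -, -, -, a, ha, hl⟩ := h
  rw [List.getLastD_eq_getLast?, hl]
  exact ha

/-- cons of paths. -/
def cns {N : ℕ} (l : List V) (w' : Fin N → List V) : Fin (N+1) → List V := Fin.cons l w'

@[simp] lemma cns_zero {N : ℕ} (l : List V) (w' : Fin N → List V) : cns l w' 0 = l := rfl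

@[simp] lemma cns_succ {N : ℕ} (l : List V) (w' : Fin N → List V) (j : Fin N) :
    cns l w' j.succ = w' j := by
  simp [cns]

lemma cns_comp_succ {N : ℕ} (l : List V) (w' : Fin N → List V) :
    (cns l w') ∘ Fin.succ = w' := by
  funext j; simp

open Classical in
/-- key induction: total weight of golf sequences is 1. -/
lemma gaux_tsum_eq_one [Nonempty V] (hKnonneg : ∀ x y, 0 ≤ K x y)
    (hKstoch : ∀ x, ∑ y, K x y = 1)
    (hirr : ∀ x y : V, ∃ n : ℕ, 0 < ((Matrix.of K) ^ n) x y) :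
    ∀ (N : ℕ) (A : Finset V) (S : Fin N → V), N ≤ A.card →
    (∑' w : Fin N → List V,
      if Gaux K A S w then ∏ j, ENNReal.ofReal (pathWeight K (w j)) else 0) = 1 := by
  intro N
  induction N with
  | zero =>
    intro A S _
    rw [tsum_eq_single (fun j => j.elim0) (fun w hw => absurd (Subsingleton.elim w _) hw)]
    have hg : Gaux K A S (fun j => j.elim0) := fun j => j.elim0
    rw [if_pos hg]
    simp
  | succ N ih =>
    intro A S hcard
    have hAne : A.Nonempty := Finset.card_pos.mp (lt_of_lt_of_le (Nat.succ_pos N) hcard)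
    have hstep : ∀ (l : List V) (w' : Fin N → List V),
        (if Gaux K A S (cns l w') then
          ∏ j, ENNReal.ofReal (pathWeight K (cns l w' j)) else 0)
        = (if FH K A (S 0) l then ENNReal.ofReal (pathWeight K l) else 0)
          * (if Gaux K (A \ {l.getLastD (S 0)}) (S ∘ Fin.succ) w'
              then ∏ j : Fin N, ENNReal.ofReal (pathWeight K (w' j)) else 0) := by
      intro l w'
      have hG : Gaux K A S (cns l w') ↔ FH K A (S 0) l ∧
          Gaux K (A \ {l.getLastD (S 0)}) (S ∘ Fin.succ) w' := by
        rw [gaux_rec]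
        rw [cns_zero, cns_comp_succ]
      have hprod : (∏ j, ENNReal.ofReal (pathWeight K (cns l w' j)))
          = ENNReal.ofReal (pathWeight K l)
            * ∏ j : Fin N, ENNReal.ofReal (pathWeight K (w' j)) := by
        rw [Fin.prod_univ_succ]
        simp
      rw [hprod]
      by_cases h1 : FH K A (S 0) l <;>
        by_cases h2 : Gaux K (A \ {l.getLastD (S 0)}) (S ∘ Fin.succ) w' <;>
        simp [hG, h1, h2]
    calc (∑' w : Fin (N+1) → List V,
          if Gaux K A S w then ∏ j, ENNReal.ofReal (pathWeight K (w j)) else 0)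
        = ∑' p : List V × (Fin N → List V),
            (if Gaux K A S (cns p.1 p.2) then
              ∏ j, ENNReal.ofReal (pathWeight K (cns p.1 p.2 j)) else 0) := by
          rw [← Equiv.tsum_eq (Fin.consEquiv (fun _ : Fin (N+1) => List V))]
          apply tsum_congr
          intro p
          have : (Fin.consEquiv (fun _ : Fin (N+1) => List V)) p = cns p.1 p.2 := rfl
          rw [this]
      _ = ∑' (l : List V), ∑' (w' : Fin N → List V),
            (if Gaux K A S (cns l w') then
              ∏ j, ENNReal.ofReal (pathWeight K (cns l w' j)) else 0) :=
          ENNReal.tsum_prod (f := fun l w' =>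
            if Gaux K A S (cns l w') then
              ∏ j, ENNReal.ofReal (pathWeight K (cns l w' j)) else 0)
      _ = ∑' (l : List V), (if FH K A (S 0) l then ENNReal.ofReal (pathWeight K l) else 0) := by
          apply tsum_congr
          intro l
          rw [tsum_congr (fun w' => hstep l w'), ENNReal.tsum_mul_left]
          by_cases h1 : FH K A (S 0) l
          · have hmem : l.getLastD (S 0) ∈ A := getLastD_mem_of_fh h1
            have hNle : N ≤ (A \ {l.getLastD (S 0)}).card := by
              rw [Finset.card_sdiff_of_subset (Finset.singleton_subset_iff.mpr hmem),
                Finset.card_singleton]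
              omega
            rw [ih _ _ hNle, mul_one]
          · simp [h1]
      _ = 1 := gFull_eq_one hKnonneg hKstoch hirr hAne (S 0)

end Golf

namespace Golf

variable {V : Type*} [Fintype V] [DecidableEq V] {K : V → V → ℝ}

lemma getLastD_eq_of_getLast? {l : List V} {d a : V} (h : l.getLast? = some a) :
    l.getLastD d = a := by
  rw [List.getLastD_eq_getLast?, h, Option.getD_some]

lemma ite_inst {α : Sort*} (c : Prop) (i1 i2 : Decidable c) (a b : α) :
    @ite _ c i1 a b = @ite _ c i2 a b := by
  rw [Subsingleton.elim i1 i2]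

lemma golf_iff_gaux (HoleSet : Finset V) {N : ℕ} (S : Fin N → V) (w : Fin N → List V) :
    IsGolfSequenceKer K HoleSet S w ↔ Gaux K HoleSet S w := by
  constructor
  · rintro ⟨F, hinj, h⟩
    intro j
    obtain ⟨hne, hch, hhd, hlast, hmem, hdl⟩ := h j
    refine ⟨hne, hch, hhd, ?_, F j, ?_, hlast⟩
    · intro v hv
      rw [Finset.mem_sdiff]
      rintro ⟨hvH, hvno⟩
      obtain ⟨k, hk, hFk⟩ := hdl v hv hvH
      apply hvno
      rw [occ, Finset.mem_image]
      refine ⟨k, Finset.mem_filter.mpr ⟨Finset.mem_univ k, hk⟩, ?_⟩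
      rw [getLastD_eq_of_getLast? (h k).2.2.2.1, hFk]
    · rw [Finset.mem_sdiff]
      refine ⟨hmem, ?_⟩
      rw [occ, Finset.mem_image]
      rintro ⟨k, hkmem, hEq⟩
      have hk : k < j := (Finset.mem_filter.mp hkmem).2
      rw [getLastD_eq_of_getLast? (h k).2.2.2.1] at hEq
      exact absurd (hinj hEq) (ne_of_lt hk)
  · intro h
    refine ⟨fun j => (w j).getLastD (S j), ?_, ?_⟩
    · have key : ∀ {j k : Fin N}, k < j →
          (w k).getLastD (S k) ≠ (w j).getLastD (S j) := by
        intro j k hkj heq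
        obtain ⟨-, -, -, -, a, ha, hl⟩ := h j
        rw [getLastD_eq_of_getLast? hl] at heq
        rw [Finset.mem_sdiff] at ha
        apply ha.2
        rw [occ, Finset.mem_image]
        exact ⟨k, Finset.mem_filter.mpr ⟨Finset.mem_univ k, hkj⟩, heq⟩
      intro j k heq
      by_contra hne
      rcases lt_or_gt_of_ne hne with hlt | hgt
      · exact key hlt heq
      · exact key hgt heq.symm
    · intro j
      obtain ⟨hne, hch, hhd, hdl, a, ha, hl⟩ := h j
      rw [Finset.mem_sdiff] at ha
      refine ⟨hne, hch, hhd, ?_, ?_, ?_⟩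
      · show (w j).getLast? = some ((w j).getLastD (S j))
        rw [getLastD_eq_of_getLast? hl]
        exact hl
      · show (w j).getLastD (S j) ∈ HoleSet
        rw [getLastD_eq_of_getLast? hl]
        exact ha.1
      · intro v hv hvH
        have := hdl v hv
        rw [Finset.mem_sdiff] at this
        have hvocc : v ∈ occ w S j := by
          by_contra hno
          exact this ⟨hvH, hno⟩
        rw [occ, Finset.mem_image] at hvocc
        obtain ⟨k, hkmem, hEq⟩ := hvocc
        exact ⟨k, (Finset.mem_filter.mp hkmem).2, hEq⟩

open Classical in
lemma tsum_subtype_ite (hKnonneg : ∀ x y, 0 ≤ K x y) {N : ℕ} (P : (Fin N → List V) → Prop) :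
    (∑' w : {w : Fin N → List V // P w}, ENNReal.ofReal (∏ j, pathWeight K (w.1 j)))
      = ∑' w : Fin N → List V,
          if P w then ∏ j, ENNReal.ofReal (pathWeight K (w j)) else 0 := by
  refine Eq.trans (tsum_subtype {w : Fin N → List V | P w}
    (fun w => ENNReal.ofReal (∏ j, pathWeight K (w j)))) ?_
  apply tsum_congr
  intro w
  rw [Set.indicator_apply]
  simp only [Set.mem_setOf_eq]
  split_ifs with h
  · exact ENNReal.ofReal_prod_of_nonneg (fun j _ => pathWeight_nonneg hKnonneg (w j))
  · rfl

open Classical in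
lemma golf_tsum_enn [Nonempty V] (hKnonneg : ∀ x y, 0 ≤ K x y)
    (hKstoch : ∀ x, ∑ y, K x y = 1)
    (hirr : ∀ x y : V, ∃ n : ℕ, 0 < ((Matrix.of K) ^ n) x y)
    (HoleSet : Finset V) {N : ℕ} (hN : N ≤ HoleSet.card) (S : Fin N → V) :
    (∑' w : {w : Fin N → List V // IsGolfSequenceKer K HoleSet S w},
      ENNReal.ofReal (∏ j, pathWeight K (w.1 j))) = 1 := by
  rw [tsum_subtype_ite hKnonneg]
  rw [tsum_congr (fun w => if_congr (golf_iff_gaux HoleSet S w) rfl rfl)]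
  exact gaux_tsum_eq_one hKnonneg hKstoch hirr N HoleSet S hN

open Classical in
lemma golf_miss_tsum_enn [Nonempty V] (hKnonneg : ∀ x y, 0 ≤ K x y)
    (hKstoch : ∀ x, ∑ y, K x y = 1)
    (hirr : ∀ x y : V, ∃ n : ℕ, 0 < ((Matrix.of K) ^ n) x y)
    (HoleSet : Finset V) {N : ℕ} (hN : N ≤ HoleSet.card) (S : Fin N → V)
    (hN2 : N = HoleSet.card - 1) (hc1 : 1 ≤ HoleSet.card) :
    ∑ f ∈ HoleSet,
      (∑' w : {w : Fin N → List V // IsGolfSequenceKer K HoleSet S w ∧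
          ∀ j, (w j).getLast? ≠ some f},
        ENNReal.ofReal (∏ j, pathWeight K (w.1 j))) = 1 := by
  have hrw : ∀ f, (∑' w : {w : Fin N → List V // IsGolfSequenceKer K HoleSet S w ∧
          ∀ j, (w j).getLast? ≠ some f},
        ENNReal.ofReal (∏ j, pathWeight K (w.1 j)))
      = ∑' w : Fin N → List V,
          if IsGolfSequenceKer K HoleSet S w ∧ (∀ j, (w j).getLast? ≠ some f)
          then ∏ j, ENNReal.ofReal (pathWeight K (w j)) else 0 :=
    fun f => (tsum_subtype_ite hKnonneg _).trans
      (tsum_congr fun w => ite_inst _ _ _ _ _)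
  calc ∑ f ∈ HoleSet, (∑' w : {w : Fin N → List V // IsGolfSequenceKer K HoleSet S w ∧
          ∀ j, (w j).getLast? ≠ some f},
        ENNReal.ofReal (∏ j, pathWeight K (w.1 j)))
      = ∑ f ∈ HoleSet, ∑' w : Fin N → List V,
          (if IsGolfSequenceKer K HoleSet S w ∧ (∀ j, (w j).getLast? ≠ some f)
          then ∏ j, ENNReal.ofReal (pathWeight K (w j)) else 0) := by
        exact Finset.sum_congr rfl fun f _ => hrw f
    _ = ∑' w : Fin N → List V, ∑ f ∈ HoleSet,
          (if IsGolfSequenceKer K HoleSet S w ∧ (∀ j, (w j).getLast? ≠ some f)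
          then ∏ j, ENNReal.ofReal (pathWeight K (w j)) else 0) :=
        (Summable.tsum_finsetSum (fun f _ => ENNReal.summable)).symm
    _ = ∑' w : Fin N → List V,
          (if IsGolfSequenceKer K HoleSet S w
          then ∏ j, ENNReal.ofReal (pathWeight K (w j)) else 0) := by
        apply tsum_congr
        intro w
        by_cases hg : IsGolfSequenceKer K HoleSet S w
        · obtain ⟨F, hinj, h⟩ := id hg
          have hmiss : ∀ f, (IsGolfSequenceKer K HoleSet S w ∧
              (∀ j, (w j).getLast? ≠ some f)) ↔ f ∉ Finset.image F Finset.univ := by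
            intro f
            constructor
            · rintro ⟨-, hm⟩ hmem
              rw [Finset.mem_image] at hmem
              obtain ⟨j, -, rfl⟩ := hmem
              exact hm j (h j).2.2.2.1
            · intro hmem
              refine ⟨⟨F, hinj, h⟩, fun j hj => ?_⟩
              apply hmem
              rw [(h j).2.2.2.1] at hj
              rw [Finset.mem_image]
              exact ⟨j, Finset.mem_univ j, Option.some_injective _ hj⟩
          have hfilter : HoleSet.filter
              (fun f => IsGolfSequenceKer K HoleSet S w ∧ (∀ j, (w j).getLast? ≠ some f))
              = HoleSet \ Finset.image F Finset.univ := by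
            ext f
            simp only [Finset.mem_filter, Finset.mem_sdiff, hmiss f]
          have hcard1 : (HoleSet.filter
              (fun f => IsGolfSequenceKer K HoleSet S w ∧ (∀ j, (w j).getLast? ≠ some f))).card
              = 1 := by
            rw [hfilter, Finset.card_sdiff_of_subset]
            · rw [Finset.card_image_of_injective _ hinj]
              simp only [Finset.card_univ, Fintype.card_fin]
              omega
            · intro f hf
              rw [Finset.mem_image] at hf
              obtain ⟨j, -, rfl⟩ := hf
              exact (h j).2.2.2.2.1
          rw [← Finset.sum_filter, Finset.sum_const, hcard1, one_smul, if_pos hg]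
        · rw [if_neg hg, Finset.sum_eq_zero]
          intro f _
          rw [if_neg]
          rintro ⟨hg', -⟩
          exact hg hg'
    _ = 1 := by
        rw [tsum_congr (fun w => if_congr (golf_iff_gaux HoleSet S w) rfl rfl)]
        exact gaux_tsum_eq_one hKnonneg hKstoch hirr N HoleSet S hN

lemma real_of_enn {α : Type*} (f : α → ℝ) (hf : ∀ a, 0 ≤ f a) {c : ℝ≥0∞} (hc : c ≠ ⊤)
    (h : ∑' a, ENNReal.ofReal (f a) = c) : ∑' a, f a = c.toReal := by
  have hs : Summable f := by
    have h1 := ENNReal.summable_toReal (by rw [h]; exact hc)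
    exact h1.congr fun a => ENNReal.toReal_ofReal (hf a)
  have h2 : ENNReal.ofReal (∑' a, f a) = c := by
    rw [ENNReal.ofReal_tsum_of_nonneg hf hs, h]
  rw [← h2, ENNReal.toReal_ofReal (tsum_nonneg fun a => hf a)]

end Golf

/-- stochastic golf termination.  For an irreducible stochastic
kernel `K` on a finite set `V`, starting points outside the hole set and at
most `|HoleSet|` balls, the stochastic golf sequence terminates almost surely:
the total probability of all golf sequences is `1`.  Moreover, if
`N = |HoleSet| − 1`, the probabilities that a given hole `f` remains
unoccupied sum to `1` over `f ∈ HoleSet`. -/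
theorem stochastic_golf_sequence_terminates
    {V : Type*} [Fintype V] [DecidableEq V] [Nonempty V]
    (K : V → V → ℝ)
    (hKnonneg : ∀ x y, 0 ≤ K x y)
    (hKstoch : ∀ x, ∑ y, K x y = 1)
    (hirr : ∀ x y : V, ∃ n : ℕ, 0 < ((Matrix.of K) ^ n) x y)
    (HoleSet : Finset V) {N : ℕ} (hN : N ≤ HoleSet.card)
    (S : Fin N → V) (hS : ∀ j, S j ∉ HoleSet) :
    (∑' w : {w : Fin N → List V // IsGolfSequenceKer K HoleSet S w},
        ∏ j, pathWeight K (w.1 j)) = 1 ∧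
    (N = HoleSet.card - 1 → HoleSet.card ≥ 1 →
      ∑ f ∈ HoleSet,
        (∑' w : {w : Fin N → List V // IsGolfSequenceKer K HoleSet S w ∧
            ∀ j, (w j).getLast? ≠ some f},
          ∏ j, pathWeight K (w.1 j)) = 1) := by

  constructor
  · have := Golf.real_of_enn (fun w : {w : Fin N → List V // IsGolfSequenceKer K HoleSet S w} =>
      ∏ j, pathWeight K (w.1 j))
      (fun w => Finset.prod_nonneg fun j _ => Golf.pathWeight_nonneg hKnonneg (w.1 j))
      ENNReal.one_ne_top
      (Golf.golf_tsum_enn hKnonneg hKstoch hirr HoleSet hN S)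
    simpa using this
  · intro hN2 hc1
    have hsum := Golf.golf_miss_tsum_enn hKnonneg hKstoch hirr HoleSet hN S hN2 hc1
    have hne : ∀ f ∈ HoleSet,
        (∑' w : {w : Fin N → List V // IsGolfSequenceKer K HoleSet S w ∧
            ∀ j, (w j).getLast? ≠ some f},
          ENNReal.ofReal (∏ j, pathWeight K (w.1 j))) ≠ ⊤ := by
      intro f hf
      have hle := Finset.single_le_sum (f := fun f => ∑' w : {w : Fin N → List V //
          IsGolfSequenceKer K HoleSet S w ∧ ∀ j, (w j).getLast? ≠ some f},
          ENNReal.ofReal (∏ j, pathWeight K (w.1 j))) (fun f _ => zero_le) hf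
      rw [hsum] at hle
      exact ne_top_of_le_ne_top ENNReal.one_ne_top hle
    have hreal : ∀ f ∈ HoleSet,
        (∑' w : {w : Fin N → List V // IsGolfSequenceKer K HoleSet S w ∧
            ∀ j, (w j).getLast? ≠ some f},
          ∏ j, pathWeight K (w.1 j))
        = (∑' w : {w : Fin N → List V // IsGolfSequenceKer K HoleSet S w ∧
            ∀ j, (w j).getLast? ≠ some f},
          ENNReal.ofReal (∏ j, pathWeight K (w.1 j))).toReal := by
      intro f hf
      exact Golf.real_of_enn _
        (fun w => Finset.prod_nonneg fun j _ => Golf.pathWeight_nonneg hKnonneg (w.1 j))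
        (hne f hf) rfl
    rw [Finset.sum_congr rfl hreal, ← ENNReal.toReal_sum hne, hsum, ENNReal.toReal_one]
end

section
/- Stationarity of the LastExitTree chain: let ←M be an irreducible stochastic kernel positive on a finite connected graph G. The Markov chain on rooted spanning trees of G with kernel Q((t,r),(t',r')) = ←M_{r,r'} if (t',r') is obtained from (t,r) by adding edge (r,r') and deleting the outgoing edge of r' (and 0 otherwise), has stationary distribution π(t,r) proportional to ∏_{e ∈ E(t,r)} ←M_e; i.e., for every (t',r'), ∑_{(t,r)} π(t,r) Q((t,r),(t',r')) = π(t',r'). -/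
open scoped Classical

/-- The last-exit-tree move: from the rooted tree `(p, r)` and a step of the
walk from `r` to `r'`, add the oriented edge `(r, r')` and delete the outgoing
edge of `r'`; the result is the parent map of a tree rooted at `r'`. -/
def treeStep {V : Type*} [DecidableEq V] (p : V → V) (r r' : V) : V → V :=
  fun u => if u = r ∨ u = r' then r' else p u

private lemma iterate_mod' {V : Type*} (p : V → V) (x : V) {c : ℕ} (hc : p^[c] x = x) (n : ℕ) :
    p^[n] x = p^[n % c] x := by
  conv_lhs => rw [← Nat.mod_add_div n c]
  rw [Function.iterate_add_apply]
  congr 1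
  rw [Function.iterate_mul]
  exact Function.iterate_fixed hc _

private lemma root_unique_aux {V : Type*} {p' : V → V} {r' : V} (h' : p' r' = r')
    {x r1 r2 : V} (hr2 : r2 ≠ r') (h1 : p' r1 = r')
    {m1 m2 : ℕ} (hm1 : p'^[m1] x = r1) (hm2 : p'^[m2] x = r2) (hle : m1 ≤ m2) : r1 = r2 := by
  rcases Nat.eq_or_lt_of_le hle with heq | hlt
  · rw [← hm1, ← hm2, heq]
  · exfalso
    apply hr2
    have h3 : p'^[m2] x = p'^[m2 - m1] r1 := by
      rw [← hm1, ← Function.iterate_add_apply, Nat.sub_add_cancel hle]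
    obtain ⟨d, hd⟩ : ∃ d, m2 - m1 = d + 1 := ⟨m2 - m1 - 1, by omega⟩
    rw [← hm2, h3, hd, Function.iterate_succ_apply, h1, Function.iterate_fixed h']

private lemma root_unique' {V : Type*} {p' : V → V} {r' : V} (h' : p' r' = r')
    {x r1 r2 : V} (hr1 : r1 ≠ r') (hr2 : r2 ≠ r') (h1 : p' r1 = r') (h2 : p' r2 = r')
    {m1 m2 : ℕ} (hm1 : p'^[m1] x = r1) (hm2 : p'^[m2] x = r2) : r1 = r2 := by
  rcases le_total m1 m2 with h | h
  · exact root_unique_aux h' hr2 h1 hm1 hm2 h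
  · exact (root_unique_aux h' hr1 h2 hm2 hm1 h).symm

private lemma pred_props {V : Type*} [DecidableEq V] {G : SimpleGraph V}
    {p p' : V → V} {r r' : V}
    (ht : IsRootedSpanningTree G p r) (hstep : treeStep p r r' = p') (hne : r ≠ r') :
    p' r = r' ∧ (∀ u, u ≠ r → u ≠ r' → p u = p' u) ∧ ∃ m, p'^[m] (p r') = r := by
  classical
  obtain ⟨hr, hadj, hreach⟩ := ht
  have hpr : p' r = r' := by rw [← hstep]; simp [treeStep]
  have hag : ∀ u, u ≠ r → u ≠ r' → p u = p' u := by
    intro u h1 h2; rw [← hstep]; simp [treeStep, h1, h2]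
  refine ⟨hpr, hag, ?_⟩
  set x := p r' with hx
  obtain ⟨n, hn⟩ := hreach x
  have hex : ∃ n, p^[n] x = r := ⟨n, hn⟩
  have hNr : p^[Nat.find hex] x = r := Nat.find_spec hex
  set N := Nat.find hex with hN
  have hmin : ∀ k < N, p^[k] x ≠ r := fun k hk => Nat.find_min hex hk
  have hnotr' : ∀ k < N, p^[k] x ≠ r' := by
    intro k hk hkr'
    have hcyc : p^[k+1] x = x := by
      rw [Function.iterate_succ_apply', hkr', ← hx]
    have h5 : p^[N] x = p^[N % (k+1)] x := iterate_mod' p x hcyc N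
    have hlt : N % (k+1) < N :=
      lt_of_le_of_lt (Nat.lt_succ_iff.mp (Nat.mod_lt N (Nat.succ_pos k))) hk
    exact hmin _ hlt (h5 ▸ hNr)
  have hiter : ∀ k ≤ N, p'^[k] x = p^[k] x := by
    intro k hk
    induction k with
    | zero => rfl
    | succ k ih =>
      have hklt : k < N := hk
      rw [Function.iterate_succ_apply', Function.iterate_succ_apply',
        ih (le_of_lt hklt), (hag _ (hmin k hklt) (hnotr' k hklt)).symm]
  exact ⟨N, by rw [hiter N le_rfl]; exact hNr⟩

private lemma construct' {V : Type*} [DecidableEq V] {G : SimpleGraph V}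
    {p' : V → V} {r' : V} (ht' : IsRootedSpanningTree G p' r')
    {x : V} (hadjx : G.Adj r' x) :
    ∃ r p, (IsRootedSpanningTree G p r ∧ treeStep p r r' = p') ∧ p r' = x := by
  classical
  obtain ⟨hr', hadj', hreach'⟩ := ht'
  have hxne : x ≠ r' := fun h => G.irrefl (h ▸ hadjx)
  obtain ⟨n0, hn0⟩ := hreach' x
  have hex : ∃ n, p'^[n] x = r' := ⟨n0, hn0⟩
  have hNs : p'^[Nat.find hex] x = r' := Nat.find_spec hex
  set N := Nat.find hex with hN
  have hmin : ∀ k < N, p'^[k] x ≠ r' := fun k hk => Nat.find_min hex hk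
  have hNpos : 0 < N := by
    rcases Nat.eq_zero_or_pos N with h | h
    · exfalso; apply hxne; rw [← hNs, h]; rfl
    · exact h
  set r := p'^[N-1] x with hrdef
  have hrne : r ≠ r' := hmin _ (Nat.sub_lt hNpos one_pos)
  have hpr : p' r = r' := by
    have h9 : p'^[N] x = p' (p'^[N-1] x) := by
      conv_lhs => rw [show N = (N-1)+1 by omega]
      rw [Function.iterate_succ_apply']
    rw [hrdef, ← h9]; exact hNs
  set p : V → V := (fun u => if u = r' then x else if u = r then r else p' u) with hp
  have hpr' : p r' = x := by simp [hp]
  have hpr2 : p r = r := by simp [hp, hrne]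
  have hiter : ∀ k ≤ N - 1, p^[k] x = p'^[k] x := by
    intro k hk
    induction k with
    | zero => rfl
    | succ k ih =>
      have hk1 : k < N - 1 := hk
      rw [Function.iterate_succ_apply', Function.iterate_succ_apply', ih (le_of_lt hk1)]
      have h1 : p'^[k] x ≠ r' := hmin k (by omega)
      have h2 : p'^[k] x ≠ r := by
        intro h
        apply hmin (k+1) (by omega)
        rw [Function.iterate_succ_apply', h, hpr]
      simp [hp, h1, h2]
  have hxr : p^[N-1] x = r := by rw [hiter _ le_rfl, hrdef]
  have hreach : ∀ n u, p'^[n] u = r' → ∃ m, p^[m] u = r := by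
    intro n
    induction n using Nat.strong_induction_on with
    | _ n ih =>
      intro u hn
      by_cases hu1 : u = r
      · exact ⟨0, hu1⟩
      by_cases hu2 : u = r'
      · refine ⟨(N-1) + 1, ?_⟩
        rw [Function.iterate_succ_apply, hu2, hpr', hxr]
      · have hn0 : n ≠ 0 := by
          intro h; apply hu2; rw [← hn, h]; rfl
        have hn' : p'^[n-1] (p' u) = r' := by
          rw [← Function.iterate_succ_apply, Nat.sub_one,
            Nat.succ_pred_eq_of_pos (Nat.pos_of_ne_zero hn0)]
          exact hn
        obtain ⟨m, hm⟩ := ih (n-1) (by omega) (p' u) hn'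
        refine ⟨m + 1, ?_⟩
        rw [Function.iterate_succ_apply]
        have : p u = p' u := by simp [hp, hu1, hu2]
        rw [this, hm]
  refine ⟨r, p, ⟨⟨hpr2, ?_, ?_⟩, ?_⟩, hpr'⟩
  · intro u hu
    by_cases hu2 : u = r'
    · rw [hu2, hpr']; exact hadjx
    · have : p u = p' u := by simp [hp, hu, hu2]
      rw [this]; exact hadj' u hu2
  · intro u
    obtain ⟨n, hn⟩ := hreach' u
    exact hreach n u hn
  · funext u
    by_cases hu1 : u = r
    · simp only [treeStep, hu1, if_pos (Or.inl rfl)]; exact hpr.symm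
    by_cases hu2 : u = r'
    · simp only [treeStep, if_pos (Or.inr hu2)]; rw [hu2]; exact hr'.symm
    · simp [treeStep, hu1, hu2, hp]

/-- stationarity of the last-exit-tree chain.  For an
irreducible stochastic kernel `K` positive on a finite connected graph `G`,
the measure `π (t, r) = ∏_{e ∈ E(t,r)} K e` on rooted spanning trees is
stationary for the tree chain whose transitions `(t, r) → (t', r')` have
probability `K r r'` when `t'` is obtained from `t` by adding the edge
`(r, r')` and deleting the outgoing edge of `r'`. -/
theorem lastExitTree_chain_stationary
    {V : Type*} [Fintype V] [DecidableEq V]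
    (hcard : 2 ≤ Fintype.card V)
    (G : SimpleGraph V) (hconn : G.Connected)
    (K : V → V → ℝ)
    (hKnonneg : ∀ x y, 0 ≤ K x y)
    (hKstoch : ∀ x, ∑ y, K x y = 1)
    (hpos : ∀ x y, 0 < K x y ↔ G.Adj x y)
    (p' : V → V) (r' : V) (htree' : IsRootedSpanningTree G p' r') :
    (∑ r : V, ∑ p : V → V,
        if IsRootedSpanningTree G p r ∧ treeStep p r r' = p'
        then (∏ u ∈ Finset.univ.erase r, K u (p u)) * K r r' else 0) =
      ∏ u ∈ Finset.univ.erase r', K u (p' u) := by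
  classical
  obtain ⟨hroot', hadj', hreach'⟩ := htree'
  have htree' : IsRootedSpanningTree G p' r' := ⟨hroot', hadj', hreach'⟩
  have hK0 : ∀ x y, ¬ G.Adj x y → K x y = 0 := by
    intro x y h
    rcases (hKnonneg x y).lt_or_eq with hlt | heq
    · exact absurd ((hpos x y).1 hlt) h
    · exact heq.symm
  have hstepself : treeStep p' r' r' = p' := by
    funext u
    by_cases hu : u = r'
    · simp only [treeStep, if_pos (Or.inl hu)]; rw [hu, hroot']
    · simp [treeStep, hu]
  have hrootcase : ∀ p : V → V, IsRootedSpanningTree G p r' →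
      treeStep p r' r' = p' → p = p' := by
    intro p hp hs
    funext u
    by_cases hu : u = r'
    · rw [hu, hp.1, hroot']
    · have h := congrFun hs u
      simp only [treeStep, hu, or_self, if_neg, not_false_iff] at h
      exact h
  set C := ∏ u ∈ Finset.univ.erase r', K u (p' u) with hC
  have key : (∑ z ∈ Finset.univ.filter
        (fun z : V × (V → V) =>
          IsRootedSpanningTree G z.2 z.1 ∧ treeStep z.2 z.1 r' = p'),
        (∏ u ∈ Finset.univ.erase z.1, K u (z.2 u)) * K z.1 r')
      = ∑ x ∈ insert r' (Finset.univ.filter (fun x => G.Adj r' x)), C * K r' x := by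
    refine Finset.sum_bij (fun z _ => z.2 r') ?_ ?_ ?_ ?_
    · intro z hz
      simp only [Finset.mem_filter, Finset.mem_univ, true_and] at hz
      by_cases h : z.1 = r'
      · have hx : z.2 r' = r' := by rw [← h]; exact hz.1.1
        rw [hx]; exact Finset.mem_insert_self _ _
      · have := hz.1.2.1 r' (fun hh => h hh.symm)
        exact Finset.mem_insert_of_mem (Finset.mem_filter.2 ⟨Finset.mem_univ _, this⟩)
    · intro z1 hz1 z2 hz2 hi
      replace hi : z1.2 r' = z2.2 r' := hi
      simp only [Finset.mem_filter, Finset.mem_univ, true_and] at hz1 hz2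
      by_cases h1 : z1.1 = r'
      · have e1 : z1.2 = p' := hrootcase z1.2 (h1 ▸ hz1.1) (h1 ▸ hz1.2)
        have hx : z2.2 r' = r' := by rw [← hi, e1, hroot']
        by_cases h2 : z2.1 = r'
        · have e2 : z2.2 = p' := hrootcase z2.2 (h2 ▸ hz2.1) (h2 ▸ hz2.2)
          exact Prod.ext (h1.trans h2.symm) (e1.trans e2.symm)
        · exfalso
          have := hz2.1.2.1 r' (fun hh => h2 hh.symm)
          rw [hx] at this; exact G.irrefl this
      · by_cases h2 : z2.1 = r'
        · have e2 : z2.2 = p' := hrootcase z2.2 (h2 ▸ hz2.1) (h2 ▸ hz2.2)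
          have hx : z1.2 r' = r' := by rw [hi, e2, hroot']
          exfalso
          have := hz1.1.2.1 r' (fun hh => h1 hh.symm)
          rw [hx] at this; exact G.irrefl this
        · obtain ⟨ha1, hb1, m1, hm1⟩ := pred_props hz1.1 hz1.2 h1
          obtain ⟨ha2, hb2, m2, hm2⟩ := pred_props hz2.1 hz2.2 h2
          rw [hi] at hm1
          have hr12 : z1.1 = z2.1 := root_unique' hroot' h1 h2 ha1 ha2 hm1 hm2
          have hfun : z1.2 = z2.2 := by
            funext u
            by_cases hu1 : u = r'
            · rw [hu1, hi]
            by_cases hu2 : u = z1.1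
            · rw [hu2, hz1.1.1, hr12, hz2.1.1]
            · have hu2' : u ≠ z2.1 := hr12 ▸ hu2
              rw [hb1 u hu2 hu1, ← hb2 u hu2' hu1]
          exact Prod.ext hr12 hfun
    · intro b hb
      rcases Finset.mem_insert.1 hb with hb | hb
      · refine ⟨(r', p'), Finset.mem_filter.2 ⟨Finset.mem_univ _, htree', hstepself⟩, ?_⟩
        dsimp only; rw [hroot']; exact hb.symm
      · simp only [Finset.mem_filter, Finset.mem_univ, true_and] at hb
        obtain ⟨r, p, hmem, hpr'⟩ := construct' htree' hb
        exact ⟨(r, p), Finset.mem_filter.2 ⟨Finset.mem_univ _, hmem⟩, hpr'⟩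
    · intro z hz
      simp only [Finset.mem_filter, Finset.mem_univ, true_and] at hz
      by_cases h : z.1 = r'
      · have e : z.2 = p' := hrootcase z.2 (h ▸ hz.1) (h ▸ hz.2)
        rw [e, h, hroot', hC]
      · obtain ⟨ha, hb, -⟩ := pred_props hz.1 hz.2 h
        have hr'mem : r' ∈ Finset.univ.erase z.1 :=
          Finset.mem_erase.2 ⟨fun hh => h hh.symm, Finset.mem_univ _⟩
        have hrmem : z.1 ∈ Finset.univ.erase r' :=
          Finset.mem_erase.2 ⟨h, Finset.mem_univ _⟩
        rw [← Finset.mul_prod_erase _ _ hr'mem, hC,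
          ← Finset.mul_prod_erase _ (fun u => K u (p' u)) hrmem, ha]
        have hprod : ∏ u ∈ (Finset.univ.erase z.1).erase r', K u (z.2 u)
            = ∏ u ∈ (Finset.univ.erase r').erase z.1, K u (p' u) := by
          rw [Finset.erase_right_comm]
          refine Finset.prod_congr rfl fun u hu => ?_
          simp only [Finset.mem_erase] at hu
          rw [hb u hu.1 hu.2.1]
        rw [hprod]; ring
  have hconv : (∑ r : V, ∑ p : V → V,
        if IsRootedSpanningTree G p r ∧ treeStep p r r' = p'
        then (∏ u ∈ Finset.univ.erase r, K u (p u)) * K r r' else 0)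
      = ∑ z : V × (V → V),
        if IsRootedSpanningTree G z.2 z.1 ∧ treeStep z.2 z.1 r' = p'
        then (∏ u ∈ Finset.univ.erase z.1, K u (z.2 u)) * K z.1 r' else 0 := by
    rw [← Finset.univ_product_univ, Finset.sum_product]
  rw [hconv, ← Finset.sum_filter, key]
  have hnot : r' ∉ Finset.univ.filter (fun x => G.Adj r' x) := by simp
  rw [Finset.sum_insert hnot, hK0 r' r' (G.irrefl), mul_zero, zero_add, ← Finset.mul_sum]
  have hsum : ∑ x ∈ Finset.univ.filter (fun x => G.Adj r' x), K r' x = ∑ x : V, K r' x :=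
    Finset.sum_subset (Finset.filter_subset _ _)
      (fun x _ hx => hK0 r' x (by simpa using hx))
  rw [hsum, hKstoch r', mul_one]
end

section
/- Passport of a first-entrance path: if w ∈ Paths(t,r,f) (a covering path from r with FirstEntranceTree(w) = (t,r) and last vertex f), then the passport of Heap(w) satisfies: for every u ∈ V, the number of edges out of u in Heap(w) equals the number into u, plus 1_{u=f} minus 1_{u=r}; i.e., OUTIN(Heap(w)) = [(N_u + 1_{u=f})_u, (N_u + 1_{u=r})_u] with N_f = 0, N_r ≥ 0, and N_u ≥ 1 for u ∉ {f, r}. -/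
/-- `l` encodes a covering path of `G` started at `r` and killed exactly at
the cover time. -/
def IsCoveringPathFrom {V : Type*} [DecidableEq V] (G : SimpleGraph V)
    (r : V) (l : List V) : Prop :=
  l ≠ [] ∧ List.Chain' G.Adj l ∧ l.head? = some r ∧ (∀ v : V, v ∈ l) ∧
    (∀ x, l.getLast? = some x → x ∉ l.dropLast)

/-- The first-entrance tree of the covering path `l` is the rooted spanning
tree with parent map `p` and root `r`. -/
def FirstEntranceTreeEq {V : Type*} [DecidableEq V] (l : List V)
    (p : V → V) (r : V) : Prop :=
  ∀ u : V, u ≠ r → p u = l.getD (l.idxOf u - 1) r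

/-- passport of a first-entrance path.  If `l ∈ Paths(t,r,f)`
(a covering path from `r` with first-entrance tree `(t, r)` and last vertex
`f`), then, for every vertex `u`, the number of outgoing edges of `u` in
`Heap(l)` (the number of steps of `l` arriving at `u`, i.e. the count of `u`
in `l.tail`) equals `N u + 1_{u = f}`, and the number of incoming edges at `u`
(the count of `u` in `l.dropLast`) equals `N u + 1_{u = r}`, where `N f = 0`
and `N u ≥ 1` for `u ∉ {f, r}`. -/
theorem passport_of_first_entrance_path
    {V : Type*} [Fintype V] [DecidableEq V]
    (hcard : 2 ≤ Fintype.card V)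
    (G : SimpleGraph V) (hconn : G.Connected)
    (r f : V) (p : V → V) (l : List V)
    (hcov : IsCoveringPathFrom G r l)
    (hfet : FirstEntranceTreeEq l p r)
    (hlast : l.getLast? = some f) :
    ∃ N : V → ℕ, N f = 0 ∧ (∀ u, u ≠ f → u ≠ r → 1 ≤ N u) ∧
      ∀ u : V,
        l.tail.count u = N u + (if u = f then 1 else 0) ∧
        l.dropLast.count u = N u + (if u = r then 1 else 0) := by
  obtain ⟨hne, hchain, hhead, hmem, hlastnot⟩ := hcov
  obtain ⟨a, t, rfl⟩ : ∃ a t, l = a :: t := by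
    cases l with
    | nil => exact absurd rfl hne
    | cons a t => exact ⟨a, t, rfl⟩
  have ha : a = r := by simpa using hhead
  subst a
  have ht : t ≠ [] := by
    intro h
    subst h
    obtain ⟨u, hu⟩ := Fintype.exists_ne_of_one_lt_card (by omega) r
    have := hmem u
    simp at this
    exact hu this
  have hlne : (r :: t) ≠ [] := by simp
  have hlastf : (r :: t).getLast hlne = f := by
    rwa [List.getLast?_eq_getLast hlne, Option.some_inj] at hlast
  have hdecomp : (r :: t).dropLast ++ [f] = r :: t := by
    rw [← hlastf]; exact List.dropLast_append_getLast hlne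
  have hfnot : f ∉ (r :: t).dropLast := hlastnot f hlast
  have hrd : r ∈ (r :: t).dropLast := by
    rw [List.dropLast_cons_of_ne_nil ht]
    exact List.mem_cons_self
  have hfr : f ≠ r := fun h => hfnot (h ▸ hrd)
  have hcount1 : ∀ u : V, (r :: t).count u = (r :: t).dropLast.count u + (if u = f then 1 else 0) := by
    intro u
    conv_lhs => rw [← hdecomp]
    rw [List.count_append]
    simp [List.count_singleton', eq_comm]
  have hcount2 : ∀ u : V, (r :: t).count u = t.count u + (if u = r then 1 else 0) := by
    intro u
    rcases eq_or_ne u r with rfl | h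
    · simp [List.count_cons]
    · simp [List.count_cons, h, Ne.symm h]
  refine ⟨fun u => (r :: t).dropLast.count u - (if u = r then 1 else 0), ?_, ?_, ?_⟩
  · have : (r :: t).dropLast.count f = 0 := List.count_eq_zero.mpr hfnot
    simp [this, hfr]
  · intro u huf hur
    have hu : u ∈ (r :: t).dropLast := by
      have := hmem u
      rw [← hdecomp] at this
      simp at this
      rcases this with h | h
      · exact h
      · exact absurd h huf
    have := List.count_pos_iff.mpr hu
    simp only [if_neg hur]
    omega
  · intro u
    have h1 := hcount1 u
    have h2 := hcount2 u
    have h3 : (if u = r then 1 else 0) ≤ (r :: t).dropLast.count u := by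
      by_cases h : u = r
      · subst h; simpa using List.count_pos_iff.mpr hrd
      · simp [h]
    simp only [List.tail_cons]
    omega
end
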